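/- arXiv:1105.0457 — 4 statements merged into one kernel-verified Lean document; each statement's English description precedes it below -/
import Mathlib

section
/- Let n ≥ 4 and 1 ≤ d ≤ n−1. Then Ω_{n,d} is connected under switches: for any two digraphs G, G' ∈ Ω_{n,d} there is a finite sequence G = Z_0, Z_1, ..., Z_M = G' of digraphs in Ω_{n,d} such that each Z_{a+1} is obtained from Z_a by a single switch. -/
attribute [local instance] Classical.propDecidable

/-- `A` is the arc set of a `d`-regular digraph on the vertex set `Fin n`:
no loops, and every vertex has out-degree `d` and in-degree `d`. -/
def IsRegularDigraph (n d : ℕ) (A : Finset (Fin n × Fin n)) : Prop :=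
  (∀ a ∈ A, a.1 ≠ a.2) ∧
  (∀ v : Fin n, (A.filter fun a => a.1 = v).card = d ∧
                (A.filter fun a => a.2 = v).card = d)

/-- `Ω_{n,d}`, the set of all `d`-regular digraphs on `[n]`. -/
abbrev Omega (n d : ℕ) : Type := {A : Finset (Fin n × Fin n) // IsRegularDigraph n d A}

/-- `G'` is obtained from `G` by a single switch: two non-incident arcs
`(i,j)`, `(k,l)` exchange their heads, provided no repeated arc is created. -/
def IsSwitch {n : ℕ} (G G' : Finset (Fin n × Fin n)) : Prop :=
  ∃ i j k l : Fin n,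
    (i, j) ∈ G ∧ (k, l) ∈ G ∧
    ({i, j, k, l} : Finset (Fin n)).card = 4 ∧
    (i, l) ∉ G ∧ (k, j) ∉ G ∧
    G' = (G \ {(i, j), (k, l)}) ∪ {(i, l), (k, j)}

/-- The transition matrix of the switch chain on `Ω_{n,d}`:  an unordered pair of
distinct arcs is chosen uniformly at random (there are `binom(dn,2)` such pairs) and
the corresponding switch is performed if legal; otherwise the chain stays put. -/
noncomputable def switchP (n d : ℕ) : Matrix (Omega n d) (Omega n d) ℝ :=
  Matrix.of fun X Y =>
    if X = Y then
      1 - ∑ Z : Omega n d,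
        (if Z ≠ X ∧ IsSwitch X.val Z.val then (((d * n).choose 2 : ℕ) : ℝ)⁻¹ else 0)
    else if IsSwitch X.val Y.val then (((d * n).choose 2 : ℕ) : ℝ)⁻¹ else 0

namespace SwitchConn



variable {n d : ℕ}

abbrev Arc (n : ℕ) := Fin n × Fin n

def swSet (X : Finset (Arc n)) (i j k l : Fin n) : Finset (Arc n) :=
  (X \ {(i,j),(k,l)}) ∪ {(i,l),(k,j)}

lemma mem_swSet {X : Finset (Arc n)} {i j k l : Fin n} {p : Arc n} :
    p ∈ swSet X i j k l ↔ (p ∈ X ∧ p ≠ (i,j) ∧ p ≠ (k,l)) ∨ p = (i,l) ∨ p = (k,j) := by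
  simp only [swSet, Finset.mem_union, Finset.mem_sdiff, Finset.mem_insert,
    Finset.mem_singleton]
  tauto

lemma card4 {i j k l : Fin n} (h1 : i≠j) (h2 : i≠k) (h3 : i≠l) (h4 : j≠k) (h5 : j≠l)
    (h6 : k≠l) : ({i,j,k,l} : Finset (Fin n)).card = 4 := by
  rw [Finset.card_insert_of_notMem (by simp [h1, h2, h3]),
      Finset.card_insert_of_notMem (by simp [h4, h5]),
      Finset.card_insert_of_notMem (by simp [h6]), Finset.card_singleton]

section Reg

variable {X : Finset (Arc n)} {i j k l : Fin n}

lemma swSet_regular (hX : IsRegularDigraph n d X)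
    (h1 : (i,j) ∈ X) (h2 : (k,l) ∈ X) (h9 : (i,l) ∉ X) (h10 : (k,j) ∉ X)
    (dik : i ≠ k) (dil : i ≠ l) (djk : j ≠ k) (djl : j ≠ l) :
    IsRegularDigraph n d (swSet X i j k l) := by
  have dij : i ≠ j := hX.1 _ h1
  have dkl : k ≠ l := hX.1 _ h2
  constructor
  · intro a ha
    rcases mem_swSet.1 ha with ⟨haX, -, -⟩ | rfl | rfl
    · exact hX.1 _ haX
    · exact dil
    · exact (Ne.symm djk)
  · intro v
    constructor
    · -- out-degree
      by_cases hvi : v = i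
      · subst hvi
        have : (swSet X v j k l).filter (fun a => a.1 = v)
            = insert (v,l) ((X.filter (fun a => a.1 = v)).erase (v,j)) := by
          ext a
          simp only [Finset.mem_filter, mem_swSet, Finset.mem_insert, Finset.mem_erase]
          constructor
          · rintro ⟨(⟨haX, hne1, hne2⟩ | rfl | rfl), hv⟩
            · exact Or.inr ⟨hne1, haX, hv⟩
            · exact Or.inl rfl
            · exact absurd hv (by simpa using dik.symm)
          · rintro (rfl | ⟨hne1, haX, hv⟩)
            · exact ⟨Or.inr (Or.inl rfl), rfl⟩
            · refine ⟨Or.inl ⟨haX, hne1, ?_⟩, hv⟩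
              rintro rfl
              exact dik hv.symm
        rw [this, Finset.card_insert_of_notMem (by simp [h9]),
            Finset.card_erase_of_mem (by simp [h1]), (hX.2 v).1]
        have hd : 1 ≤ d := by
          rw [← (hX.2 v).1]
          exact Finset.card_pos.2 ⟨(v,j), by simp [h1]⟩
        omega
      · by_cases hvk : v = k
        · subst hvk
          have : (swSet X i j v l).filter (fun a => a.1 = v)
              = insert (v,j) ((X.filter (fun a => a.1 = v)).erase (v,l)) := by
            ext a
            simp only [Finset.mem_filter, mem_swSet, Finset.mem_insert, Finset.mem_erase]
            constructor
            · rintro ⟨(⟨haX, hne1, hne2⟩ | rfl | rfl), hv⟩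
              · exact Or.inr ⟨hne2, haX, hv⟩
              · exact absurd hv (by simpa using dik)
              · exact Or.inl rfl
            · rintro (rfl | ⟨hne1, haX, hv⟩)
              · exact ⟨Or.inr (Or.inr rfl), rfl⟩
              · refine ⟨Or.inl ⟨haX, ?_, hne1⟩, hv⟩
                rintro rfl
                exact dik hv
          rw [this, Finset.card_insert_of_notMem (by simp [h10]),
              Finset.card_erase_of_mem (by simp [h2]), (hX.2 v).1]
          have hd : 1 ≤ d := by
            rw [← (hX.2 v).1]
            exact Finset.card_pos.2 ⟨(v,l), by simp [h2]⟩
          omega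
        · have : (swSet X i j k l).filter (fun a => a.1 = v)
              = X.filter (fun a => a.1 = v) := by
            ext a
            simp only [Finset.mem_filter, mem_swSet]
            constructor
            · rintro ⟨(⟨haX, -, -⟩ | rfl | rfl), hv⟩
              · exact ⟨haX, hv⟩
              · exact absurd hv (by simpa using (Ne.symm hvi))
              · exact absurd hv (by simpa using (Ne.symm hvk))
            · rintro ⟨haX, hv⟩
              refine ⟨Or.inl ⟨haX, ?_, ?_⟩, hv⟩
              · rintro rfl; simp at hv; exact hvi hv.symm
              · rintro rfl; simp at hv; exact hvk hv.symm
          rw [this]; exact (hX.2 v).1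
    · -- in-degree
      by_cases hvj : v = j
      · subst hvj
        have : (swSet X i v k l).filter (fun a => a.2 = v)
            = insert (k,v) ((X.filter (fun a => a.2 = v)).erase (i,v)) := by
          ext a
          simp only [Finset.mem_filter, mem_swSet, Finset.mem_insert, Finset.mem_erase]
          constructor
          · rintro ⟨(⟨haX, hne1, hne2⟩ | rfl | rfl), hv⟩
            · exact Or.inr ⟨hne1, haX, hv⟩
            · exact absurd hv (by simpa using djl.symm)
            · exact Or.inl rfl
          · rintro (rfl | ⟨hne1, haX, hv⟩)
            · exact ⟨Or.inr (Or.inr rfl), rfl⟩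
            · refine ⟨Or.inl ⟨haX, hne1, ?_⟩, hv⟩
              rintro rfl
              exact djl (by simpa using hv.symm)
        rw [this, Finset.card_insert_of_notMem (by simp [h10]),
            Finset.card_erase_of_mem (by simp [h1]), (hX.2 v).2]
        have hd : 1 ≤ d := by
          rw [← (hX.2 v).2]
          exact Finset.card_pos.2 ⟨(i,v), by simp [h1]⟩
        omega
      · by_cases hvl : v = l
        · subst hvl
          have : (swSet X i j k v).filter (fun a => a.2 = v)
              = insert (i,v) ((X.filter (fun a => a.2 = v)).erase (k,v)) := by
            ext a
            simp only [Finset.mem_filter, mem_swSet, Finset.mem_insert, Finset.mem_erase]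
            constructor
            · rintro ⟨(⟨haX, hne1, hne2⟩ | rfl | rfl), hv⟩
              · exact Or.inr ⟨hne2, haX, hv⟩
              · exact Or.inl rfl
              · exact absurd hv (by simpa using djl)
            · rintro (rfl | ⟨hne1, haX, hv⟩)
              · exact ⟨Or.inr (Or.inl rfl), rfl⟩
              · refine ⟨Or.inl ⟨haX, ?_, hne1⟩, hv⟩
                rintro rfl
                exact djl (by simpa using hv)
          rw [this, Finset.card_insert_of_notMem (by simp [h9]),
              Finset.card_erase_of_mem (by simp [h2]), (hX.2 v).2]
          have hd : 1 ≤ d := by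
            rw [← (hX.2 v).2]
            exact Finset.card_pos.2 ⟨(k,v), by simp [h2]⟩
          omega
        · have : (swSet X i j k l).filter (fun a => a.2 = v)
              = X.filter (fun a => a.2 = v) := by
            ext a
            simp only [Finset.mem_filter, mem_swSet]
            constructor
            · rintro ⟨(⟨haX, -, -⟩ | rfl | rfl), hv⟩
              · exact ⟨haX, hv⟩
              · exact absurd hv (by simpa using (Ne.symm hvl))
              · exact absurd hv (by simpa using (Ne.symm hvj))
            · rintro ⟨haX, hv⟩
              refine ⟨Or.inl ⟨haX, ?_, ?_⟩, hv⟩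
              · rintro rfl; simp at hv; exact hvj hv.symm
              · rintro rfl; simp at hv; exact hvl hv.symm
          rw [this]; exact (hX.2 v).2

lemma isSwitch_swSet (hX : IsRegularDigraph n d X)
    (h1 : (i,j) ∈ X) (h2 : (k,l) ∈ X) (h9 : (i,l) ∉ X) (h10 : (k,j) ∉ X)
    (dik : i ≠ k) (dil : i ≠ l) (djk : j ≠ k) (djl : j ≠ l) :
    IsSwitch X (swSet X i j k l) :=
  ⟨i, j, k, l, h1, h2, card4 (hX.1 _ h1) dik dil djk djl (hX.1 _ h2), h9, h10, rfl⟩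

end Reg



section Phi
variable (T : Finset (Arc n))

def Phi (X : Finset (Arc n)) : ℕ := (X \ T).card + (T \ X).card

variable {T}

lemma Phi_erase {X : Finset (Arc n)} {p : Arc n} (hp : p ∈ X) :
    Phi T (X.erase p) + (if p ∈ T then 0 else 1) = Phi T X + (if p ∈ T then 1 else 0) := by
  by_cases hT : p ∈ T
  · have h1 : X.erase p \ T = X \ T := by
      ext a
      simp only [Finset.mem_sdiff, Finset.mem_erase]
      constructor
      · rintro ⟨⟨-, ha⟩, hn⟩; exact ⟨ha, hn⟩
      · rintro ⟨ha, hn⟩; exact ⟨⟨fun e => hn (e ▸ hT), ha⟩, hn⟩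
    have h2 : T \ X.erase p = insert p (T \ X) := by
      ext a
      simp only [Finset.mem_sdiff, Finset.mem_erase, Finset.mem_insert]
      constructor
      · rintro ⟨ha, hn⟩
        by_cases e : a = p
        · exact Or.inl e
        · exact Or.inr ⟨ha, fun hX => hn ⟨e, hX⟩⟩
      · rintro (rfl | ⟨ha, hn⟩)
        · exact ⟨hT, fun h => h.1 rfl⟩
        · exact ⟨ha, fun h => hn h.2⟩
    have h3 : p ∉ T \ X := by simp [hp]
    simp [Phi, h1, h2, Finset.card_insert_of_notMem h3, hT]
    omega
  · have h1 : X.erase p \ T = (X \ T).erase p := by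
      ext a
      simp only [Finset.mem_sdiff, Finset.mem_erase]
      tauto
    have h2 : T \ X.erase p = T \ X := by
      ext a
      simp only [Finset.mem_sdiff, Finset.mem_erase]
      constructor
      · rintro ⟨ha, hn⟩
        refine ⟨ha, fun hX => hn ⟨fun e => hT (e ▸ ha), hX⟩⟩
      · rintro ⟨ha, hn⟩
        exact ⟨ha, fun h => hn h.2⟩
    have h3 : p ∈ X \ T := by simp [hp, hT]
    simp [Phi, h1, h2, Finset.card_erase_of_mem h3, hT]
    have : 1 ≤ (X \ T).card := Finset.card_pos.2 ⟨p, h3⟩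
    omega

lemma Phi_insert {X : Finset (Arc n)} {p : Arc n} (hp : p ∉ X) :
    Phi T (insert p X) + (if p ∈ T then 1 else 0) = Phi T X + (if p ∈ T then 0 else 1) := by
  by_cases hT : p ∈ T
  · have h1 : insert p X \ T = X \ T := by
      ext a
      simp only [Finset.mem_sdiff, Finset.mem_insert]
      constructor
      · rintro ⟨rfl | ha, hn⟩
        · exact absurd hT hn
        · exact ⟨ha, hn⟩
      · rintro ⟨ha, hn⟩; exact ⟨Or.inr ha, hn⟩
    have h2 : T \ insert p X = (T \ X).erase p := by
      ext a
      simp only [Finset.mem_sdiff, Finset.mem_insert, Finset.mem_erase]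
      tauto
    have h3 : p ∈ T \ X := by simp [hT, hp]
    simp [Phi, h1, h2, Finset.card_erase_of_mem h3, hT]
    have : 1 ≤ (T \ X).card := Finset.card_pos.2 ⟨p, h3⟩
    omega
  · have h1 : insert p X \ T = insert p (X \ T) := by
      ext a
      simp only [Finset.mem_sdiff, Finset.mem_insert]
      constructor
      · rintro ⟨rfl | ha, hn⟩
        · exact Or.inl rfl
        · exact Or.inr ⟨ha, hn⟩
      · rintro (rfl | ⟨ha, hn⟩)
        · exact ⟨Or.inl rfl, hT⟩
        · exact ⟨Or.inr ha, hn⟩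
    have h2 : T \ insert p X = T \ X := by
      ext a
      simp only [Finset.mem_sdiff, Finset.mem_insert]
      constructor
      · rintro ⟨ha, hn⟩; exact ⟨ha, fun h => hn (Or.inr h)⟩
      · rintro ⟨ha, hn⟩
        refine ⟨ha, ?_⟩
        rintro (rfl | h)
        · exact hT ha
        · exact hn h
    have h3 : p ∉ X \ T := by simp [hp]
    simp [Phi, h1, h2, Finset.card_insert_of_notMem h3, hT]
    omega

lemma swSet_eq_chain {X : Finset (Arc n)} {i j k l : Fin n}
    (h1 : (i,j) ∈ X) (h2 : (k,l) ∈ X) (h9 : (i,l) ∉ X) (h10 : (k,j) ∉ X)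
    (dik : i ≠ k) :
    swSet X i j k l = insert (k,j) (insert (i,l) ((X.erase (i,j)).erase (k,l))) := by
  ext a
  simp only [swSet, Finset.mem_union, Finset.mem_sdiff, Finset.mem_insert,
    Finset.mem_singleton, Finset.mem_erase]
  tauto

lemma Phi_swSet {X : Finset (Arc n)} {i j k l : Fin n}
    (h1 : (i,j) ∈ X) (h2 : (k,l) ∈ X) (h9 : (i,l) ∉ X) (h10 : (k,j) ∉ X)
    (dik : i ≠ k) :
    Phi T (swSet X i j k l)
      + (if (i,j) ∈ T then 0 else 1) + (if (k,l) ∈ T then 0 else 1)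
      + (if (i,l) ∈ T then 1 else 0) + (if (k,j) ∈ T then 1 else 0)
    = Phi T X
      + (if (i,j) ∈ T then 1 else 0) + (if (k,l) ∈ T then 1 else 0)
      + (if (i,l) ∈ T then 0 else 1) + (if (k,j) ∈ T then 0 else 1) := by
  have hkl1 : (k,l) ∈ X.erase (i,j) := by
    simp only [Finset.mem_erase]
    exact ⟨fun h => dik (congrArg Prod.fst h).symm, h2⟩
  have hil2 : (i,l) ∉ (X.erase (i,j)).erase (k,l) := by
    simp only [Finset.mem_erase]
    rintro ⟨-, -, h⟩; exact h9 h
  have hkj3 : (k,j) ∉ insert (i,l) ((X.erase (i,j)).erase (k,l)) := by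
    simp only [Finset.mem_insert, Finset.mem_erase]
    rintro (h | ⟨-, -, h⟩)
    · exact dik (congrArg Prod.fst h).symm
    · exact h10 h
  have e1 := Phi_erase (T := T) h1
  have e2 := Phi_erase (T := T) hkl1
  have e3 := Phi_insert (T := T) hil2
  have e4 := Phi_insert (T := T) hkj3
  rw [swSet_eq_chain h1 h2 h9 h10 dik]
  by_cases t1 : (i,j) ∈ T <;> by_cases t2 : (k,l) ∈ T <;>
    by_cases t3 : (i,l) ∈ T <;> by_cases t4 : (k,j) ∈ T <;>
    simp only [t1, t2, t3, t4, if_true, if_false] at e1 e2 e3 e4 ⊢ <;> omega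

end Phi


section Walk
variable (T : Finset (Arc n))

/-- closed alternating walk of length `m` in the symmetric difference. -/
def Wlk (X : Finset (Arc n)) (m : ℕ) : Prop :=
  ∃ t h : ℕ → Fin n,
    (∀ x, t (x+m) = t x) ∧ (∀ x, h (x+m) = h x) ∧
    (∀ x, (t x, h x) ∈ X ∧ (t x, h x) ∉ T) ∧
    (∀ x, (t (x+1), h x) ∈ T ∧ (t (x+1), h x) ∉ X)

variable {T}

lemma wlk_of_window {X : Finset (Arc n)} {L : ℕ} (hl : 1 ≤ L) (F H : ℕ → Fin n)
    (hb : ∀ r, r < L → (F r, H r) ∈ X ∧ (F r, H r) ∉ T)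
    (hr : ∀ r, r + 1 < L → (F (r+1), H r) ∈ T ∧ (F (r+1), H r) ∉ X)
    (hw : (F 0, H (L-1)) ∈ T ∧ (F 0, H (L-1)) ∉ X) :
    Wlk T X L := by
  have hL : 0 < L := hl
  refine ⟨fun x => F (x % L), fun x => H (x % L), ?_, ?_, ?_, ?_⟩
  · intro x; show F ((x + L) % L) = F (x % L); rw [Nat.add_mod_right]
  · intro x; show H ((x + L) % L) = H (x % L); rw [Nat.add_mod_right]
  · intro x; exact hb _ (Nat.mod_lt _ hL)
  · intro x
    show (F ((x+1) % L), H (x % L)) ∈ T ∧ (F ((x+1) % L), H (x % L)) ∉ X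
    have hx : x % L < L := Nat.mod_lt _ hL
    have key : (x + 1) % L = (x % L + 1) % L := by
      conv_lhs => rw [← Nat.mod_add_div x L]
      rw [Nat.add_right_comm, Nat.add_mul_mod_self_left]
    by_cases c : x % L + 1 = L
    · have e0 : (x + 1) % L = 0 := by rw [key, c, Nat.mod_self]
      have e1 : x % L = L - 1 := by omega
      rw [e0, e1]
      exact hw
    · have hlt : x % L + 1 < L := by omega
      have e0 : (x + 1) % L = x % L + 1 := by rw [key, Nat.mod_eq_of_lt hlt]
      rw [e0]
      exact hr _ hlt

lemma exists_red_into {X : Finset (Arc n)}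
    (hX : IsRegularDigraph n d X) (hT : IsRegularDigraph n d T)
    {u v : Fin n} (hp : (u,v) ∈ X) (hp2 : (u,v) ∉ T) : ∃ w, (w, v) ∈ T ∧ (w,v) ∉ X := by
  by_contra hcon
  push_neg at hcon
  have hsub : T.filter (fun a => a.2 = v) ⊆ X.filter (fun a => a.2 = v) := by
    intro a ha
    rw [Finset.mem_filter] at ha ⊢
    refine ⟨?_, ha.2⟩
    have : a = (a.1, v) := by rw [← ha.2]
    rw [this] at ha ⊢
    exact hcon a.1 ha.1
  have heq : T.filter (fun a => a.2 = v) = X.filter (fun a => a.2 = v) :=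
    Finset.eq_of_subset_of_card_le hsub (by rw [(hX.2 v).2, (hT.2 v).2])
  have : (u,v) ∈ T.filter (fun a => a.2 = v) := by
    rw [heq]; exact Finset.mem_filter.2 ⟨hp, rfl⟩
  exact hp2 (Finset.mem_filter.1 this).1

lemma exists_blue_out {X : Finset (Arc n)}
    (hX : IsRegularDigraph n d X) (hT : IsRegularDigraph n d T)
    {u v : Fin n} (hp : (u,v) ∈ T) (hp2 : (u,v) ∉ X) : ∃ z, (u, z) ∈ X ∧ (u,z) ∉ T := by
  by_contra hcon
  push_neg at hcon
  have hsub : X.filter (fun a => a.1 = u) ⊆ T.filter (fun a => a.1 = u) := by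
    intro a ha
    rw [Finset.mem_filter] at ha ⊢
    refine ⟨?_, ha.2⟩
    have : a = (u, a.2) := by rw [← ha.2]
    rw [this] at ha ⊢
    exact hcon a.2 ha.1
  have heq : X.filter (fun a => a.1 = u) = T.filter (fun a => a.1 = u) :=
    Finset.eq_of_subset_of_card_le hsub (by rw [(hX.2 u).1, (hT.2 u).1])
  have : (u,v) ∈ X.filter (fun a => a.1 = u) := by
    rw [heq]; exact Finset.mem_filter.2 ⟨hp, rfl⟩
  exact hp2 (Finset.mem_filter.1 this).1

/-- greedy construction of an alternating walk -/
lemma exists_wlk {X : Finset (Arc n)}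
    (hX : IsRegularDigraph n d X) (hT : IsRegularDigraph n d T)
    (hne : ∃ p, p ∈ X ∧ p ∉ T) :
    ∃ m, 1 ≤ m ∧ m ≤ (X \ T).card ∧ Wlk T X m := by
  classical
  -- state: a (blue, red) pair with head-match
  let S := {p : Arc n × Arc n // (p.1 ∈ X ∧ p.1 ∉ T) ∧ (p.2 ∈ T ∧ p.2 ∉ X) ∧ p.2.2 = p.1.2}
  have mkRed : ∀ (e : Arc n), e ∈ X → e ∉ T → ∃ r : Arc n, (r ∈ T ∧ r ∉ X) ∧ r.2 = e.2 := by
    rintro ⟨u, v⟩ h1 h2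
    obtain ⟨w, hw1, hw2⟩ := exists_red_into hX hT h1 h2
    exact ⟨(w, v), ⟨hw1, hw2⟩, rfl⟩
  have mkBlue : ∀ (r : Arc n), r ∈ T → r ∉ X → ∃ e : Arc n, (e ∈ X ∧ e ∉ T) ∧ e.1 = r.1 := by
    rintro ⟨u, v⟩ h1 h2
    obtain ⟨z, hz1, hz2⟩ := exists_blue_out hX hT h1 h2
    exact ⟨(u, z), ⟨hz1, hz2⟩, rfl⟩
  have step : ∀ x : S, ∃ y : S, y.1.1.1 = x.1.2.1 := by
    rintro ⟨⟨e, r⟩, he, hr, hh⟩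
    obtain ⟨e', he', hlink⟩ := mkBlue r hr.1 hr.2
    obtain ⟨r', hr', hh'⟩ := mkRed e' he'.1 he'.2
    exact ⟨⟨(e', r'), he', hr', hh'⟩, hlink⟩
  choose Fn hFn using step
  obtain ⟨e0, he01, he02⟩ := hne
  obtain ⟨r0, hr0, hh0⟩ := mkRed e0 he01 he02
  let x0 : S := ⟨(e0, r0), ⟨he01, he02⟩, hr0, hh0⟩
  let g : ℕ → S := fun s => Fn^[s] x0
  have glink : ∀ s, (g (s+1)).1.1.1 = (g s).1.2.1 := by
    intro s
    have : g (s+1) = Fn (g s) := Function.iterate_succ_apply' Fn s x0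
    rw [this]
    exact hFn (g s)
  -- pigeonhole on the blue arcs
  have maps : ∀ s ∈ Finset.range ((X \ T).card + 1), (g s).1.1 ∈ X \ T := by
    intro s _
    exact Finset.mem_sdiff.2 ⟨(g s).2.1.1, (g s).2.1.2⟩
  obtain ⟨i, hi, j, hj, hij, heq⟩ :=
    Finset.exists_ne_map_eq_of_card_lt_of_maps_to
      (s := Finset.range ((X \ T).card + 1)) (t := X \ T)
      (by simp) maps
  have main : ∀ i j : ℕ, j ≤ (X \ T).card → i < j → (g i).1.1 = (g j).1.1 →
      ∃ m, 1 ≤ m ∧ m ≤ (X \ T).card ∧ Wlk T X m := by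
    clear hij heq hi hj
    intro i j hjb hlt heq
    refine ⟨j - i, by omega, by omega, ?_⟩
    apply wlk_of_window (L := j - i) (by omega)
      (fun r => ((g (i+r)).1.1).1) (fun r => ((g (i+r)).1.1).2)
    · intro r _
      simp only [Prod.mk.eta]
      exact (g (i+r)).2.1
    · intro r _
      have l1 : (g (i+r+1)).1.1.1 = (g (i+r)).1.2.1 := glink (i+r)
      have l2 : (g (i+r)).1.2.2 = (g (i+r)).1.1.2 := (g (i+r)).2.2.2
      have : i + (r+1) = i + r + 1 := by omega
      rw [this, l1, ← l2]
      simp only [Prod.mk.eta]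
      exact (g (i+r)).2.2.1
    · have hj1 : j - 1 + 1 = j := by omega
      have gl := glink (j-1)
      rw [hj1] at gl
      have e1 : (g i).1.1.1 = (g (j-1)).1.2.1 :=
        (congrArg Prod.fst heq).trans gl
      have e2 : i + (j - i - 1) = j - 1 := by omega
      have l2 : (g (j-1)).1.2.2 = (g (j-1)).1.1.2 := (g (j-1)).2.2.2
      simp only [Nat.add_zero, e2]
      rw [e1, ← l2]
      simp only [Prod.mk.eta]
      exact (g (j-1)).2.2.1
  simp only [Finset.mem_range] at hi hj
  rcases Nat.lt_or_ge i j with hlt | hge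
  · exact main i j (by omega) hlt heq
  · have hlt : j < i := by omega
    exact main j i (by omega) hlt heq.symm

end Walk


section Measure
variable (T : Finset (Arc n))

noncomputable def mW (X : Finset (Arc n)) : ℕ := sInf {m | 1 ≤ m ∧ Wlk T X m}

noncomputable def mu (X : Finset (Arc n)) : ℕ := Phi T X * (d * n + 1) + mW T X

variable {T}

lemma card_reg {X : Finset (Arc n)} (hX : IsRegularDigraph n d X) :
    X.card = d * n := by
  have := Finset.card_eq_sum_card_fiberwise
    (f := fun a : Arc n => a.1) (s := X) (t := Finset.univ) (fun a _ => Finset.mem_univ _)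
  rw [this]
  have : ∀ v : Fin n, (X.filter fun a => a.1 = v).card = d := fun v => (hX.2 v).1
  simp only [this, Finset.sum_const, Finset.card_univ, Fintype.card_fin, smul_eq_mul]
  ring

lemma phi_pos_of_wlk {X : Finset (Arc n)} {m : ℕ} (hw : Wlk T X m) : 0 < Phi T X := by
  obtain ⟨t, h, -, -, hb, -⟩ := hw
  have : (t 0, h 0) ∈ X \ T := Finset.mem_sdiff.2 ⟨(hb 0).1, (hb 0).2⟩
  have : 0 < (X \ T).card := Finset.card_pos.2 ⟨_, this⟩
  unfold Phi
  omega

lemma not_wlk_one {X : Finset (Arc n)} : ¬ Wlk T X 1 := by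
  rintro ⟨t, h, hp, -, hb, hr⟩
  have e : t 1 = t 0 := hp 0
  have h1 := (hb 0).1
  have h2 := (hr 0).2
  rw [e] at h2
  exact h2 h1

lemma phi_eq_zero_iff {X : Finset (Arc n)} : Phi T X = 0 ↔ X = T := by
  constructor
  · intro h
    unfold Phi at h
    have h1 : X \ T = ∅ := Finset.card_eq_zero.1 (by omega)
    have h2 : T \ X = ∅ := Finset.card_eq_zero.1 (by omega)
    apply Finset.Subset.antisymm
    · intro a ha
      by_contra hc
      have : a ∈ X \ T := Finset.mem_sdiff.2 ⟨ha, hc⟩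
      rw [h1] at this
      exact absurd this (Finset.notMem_empty _)
    · intro a ha
      by_contra hc
      have : a ∈ T \ X := Finset.mem_sdiff.2 ⟨ha, hc⟩
      rw [h2] at this
      exact absurd this (Finset.notMem_empty _)
  · rintro rfl
    simp [Phi]

lemma mW_spec {X : Finset (Arc n)}
    (hX : IsRegularDigraph n d X) (hT : IsRegularDigraph n d T)
    (hphi : 0 < Phi T X) :
    2 ≤ mW T X ∧ mW T X ≤ d * n ∧ Wlk T X (mW T X) := by
  have hne : ∃ p, p ∈ X ∧ p ∉ T := by
    by_contra hc
    push_neg at hc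
    have h1 : X \ T = ∅ := by
      apply Finset.eq_empty_of_forall_notMem
      intro a ha
      rw [Finset.mem_sdiff] at ha
      exact ha.2 (hc a ha.1)
    have h2 : X ⊆ T := fun a ha => by
      by_contra hcc
      have : a ∈ X \ T := Finset.mem_sdiff.2 ⟨ha, hcc⟩
      rw [h1] at this; exact absurd this (Finset.notMem_empty _)
    have : X = T := Finset.eq_of_subset_of_card_le h2
      (by rw [card_reg hX, card_reg hT])
    rw [phi_eq_zero_iff.2 this] at hphi
    exact absurd hphi (lt_irrefl 0)
  obtain ⟨m, hm1, hm2, hm3⟩ := exists_wlk hX hT hne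
  have hmem : m ∈ {m | 1 ≤ m ∧ Wlk T X m} := ⟨hm1, hm3⟩
  have hne2 : {m | 1 ≤ m ∧ Wlk T X m}.Nonempty := ⟨m, hmem⟩
  have hinf : 1 ≤ mW T X ∧ Wlk T X (mW T X) := Nat.sInf_mem hne2
  have hle : mW T X ≤ m := Nat.sInf_le hmem
  have hcard : (X \ T).card ≤ X.card := Finset.card_le_card (Finset.sdiff_subset)
  rw [card_reg hX] at hcard
  refine ⟨?_, le_trans hle (by omega), hinf.2⟩
  by_contra hcc
  have h1 : mW T X = 1 := by omega
  exact not_wlk_one (h1 ▸ hinf.2)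

lemma mW_le_of_wlk {X : Finset (Arc n)} {m : ℕ} (hm : 1 ≤ m) (hw : Wlk T X m) :
    mW T X ≤ m := Nat.sInf_le ⟨hm, hw⟩

lemma mW_eq_zero_of_phi_zero {X : Finset (Arc n)} (h : Phi T X = 0) : mW T X = 0 := by
  have : {m | 1 ≤ m ∧ Wlk T X m} = ∅ := by
    apply Set.eq_empty_of_forall_notMem
    rintro m ⟨-, hw⟩
    have := phi_pos_of_wlk hw
    omega
  rw [mW, this, Nat.sInf_empty]

lemma mu_lt_of_phi_lt {X Y : Finset (Arc n)}
    (hY : IsRegularDigraph n d Y) (hT : IsRegularDigraph n d T)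
    (h : Phi T Y < Phi T X) : mu (d := d) T Y < mu (d := d) T X := by
  have hmY : mW T Y ≤ d * n := by
    rcases Nat.eq_zero_or_pos (Phi T Y) with h0 | h0
    · rw [mW_eq_zero_of_phi_zero h0]; omega
    · exact (mW_spec hY hT h0).2.1
  unfold mu
  have : Phi T Y * (d*n+1) + (d*n) < Phi T X * (d*n+1) := by
    calc Phi T Y * (d*n+1) + (d*n) < (Phi T Y + 1) * (d*n+1) := by ring_nf; omega
    _ ≤ Phi T X * (d*n+1) := Nat.mul_le_mul_right _ (by omega)
  omega

lemma mu_lt_of_plateau {X Y : Finset (Arc n)} {L : ℕ}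
    (hphi : Phi T Y = Phi T X) (hw : Wlk T Y L) (hL : 1 ≤ L) (hlt : L < mW T X) :
    mu (d := d) T Y < mu (d := d) T X := by
  have := mW_le_of_wlk hL hw
  unfold mu
  rw [hphi]
  omega

end Measure

section Plumb
variable {n d : ℕ}

def Rel (A B : Omega n d) : Prop := IsSwitch A.val B.val

abbrev Reach (A B : Omega n d) : Prop := Relation.ReflTransGen (Rel (n := n) (d := d)) A B

def Win (Z X : Omega n d) : Prop :=
  ∃ Y : Omega n d, Reach X Y ∧ mu (d := d) Z.1 Y.1 < mu (d := d) Z.1 X.1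

lemma reach_one (X : Omega n d) (i j k l : Fin n)
    (h1 : (i,j) ∈ X.1) (h2 : (k,l) ∈ X.1) (h9 : (i,l) ∉ X.1) (h10 : (k,j) ∉ X.1)
    (dik : i ≠ k) (dil : i ≠ l) (djk : j ≠ k) (djl : j ≠ l) :
    ∃ Y : Omega n d, Y.1 = swSet X.1 i j k l ∧ Rel X Y := by
  refine ⟨⟨swSet X.1 i j k l, swSet_regular X.2 h1 h2 h9 h10 dik dil djk djl⟩, rfl, ?_⟩
  exact isSwitch_swSet X.2 h1 h2 h9 h10 dik dil djk djl

lemma ne_arc {X : Finset (Arc n)} {a b : Arc n} (ha : a ∈ X) (hb : b ∉ X) : a ≠ b :=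
  fun e => hb (e ▸ ha)

lemma loopfree {X : Finset (Arc n)} (hX : IsRegularDigraph n d X) {u v : Fin n}
    (h : (u,v) ∈ X) : u ≠ v := hX.1 _ h

end Plumb

lemma pne1 {a c b e : Fin n} (h : a ≠ c) : (a,b) ≠ (c,e) :=
  fun he => h (congrArg Prod.fst he)

lemma pne2 {a c b e : Fin n} (h : b ≠ e) : (a,b) ≠ (c,e) :=
  fun he => h (congrArg Prod.snd he)

lemma mem_sw {X : Finset (Arc n)} {i j k l : Fin n} {p : Arc n}
    (hp : p ∈ X) (h1 : p ≠ (i,j)) (h2 : p ≠ (k,l)) : p ∈ swSet X i j k l :=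
  mem_swSet.2 (Or.inl ⟨hp, h1, h2⟩)

lemma mem_sw_il {X : Finset (Arc n)} {i j k l : Fin n} : (i,l) ∈ swSet X i j k l :=
  mem_swSet.2 (Or.inr (Or.inl rfl))

lemma mem_sw_kj {X : Finset (Arc n)} {i j k l : Fin n} : (k,j) ∈ swSet X i j k l :=
  mem_swSet.2 (Or.inr (Or.inr rfl))

lemma notMem_sw {X : Finset (Arc n)} {i j k l : Fin n} {p : Arc n}
    (hp : p ∉ X) (h1 : p ≠ (i,l)) (h2 : p ≠ (k,j)) : p ∉ swSet X i j k l := by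
  intro hm
  rcases mem_swSet.1 hm with ⟨hin, -, -⟩ | e | e
  · exact hp hin
  · exact h1 e
  · exact h2 e

lemma notMem_sw_ij {X : Finset (Arc n)} {i j k l : Fin n}
    (djl : j ≠ l) (dik : i ≠ k) : (i,j) ∉ swSet X i j k l := by
  intro hm
  rcases mem_swSet.1 hm with ⟨-, hne, -⟩ | e | e
  · exact hne rfl
  · exact djl (congrArg Prod.snd e)
  · exact dik (congrArg Prod.fst e)

lemma notMem_sw_kl {X : Finset (Arc n)} {i j k l : Fin n}
    (dki : k ≠ i) (dlj : l ≠ j) : (k,l) ∉ swSet X i j k l := by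
  intro hm
  rcases mem_swSet.1 hm with ⟨-, -, hne⟩ | e | e
  · exact hne rfl
  · exact dki (congrArg Prod.fst e)
  · exact dlj (congrArg Prod.snd e)
/-- out-neighbourhood as a finset of vertices -/
def Nout (X : Finset (Arc n)) (w : Fin n) : Finset (Fin n) :=
  (X.filter (fun p => p.1 = w)).image Prod.snd

lemma mem_Nout {X : Finset (Arc n)} {w v : Fin n} : v ∈ Nout X w ↔ (w,v) ∈ X := by
  constructor
  · rintro hm
    obtain ⟨p, hp, rfl⟩ := Finset.mem_image.1 hm
    obtain ⟨hpX, hp1⟩ := Finset.mem_filter.1 hp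
    have : p = (w, p.2) := by rw [← hp1]
    rwa [← this]
  · intro hm
    exact Finset.mem_image.2 ⟨(w,v), Finset.mem_filter.2 ⟨hm, rfl⟩, rfl⟩

lemma card_Nout {X : Finset (Arc n)} (hX : IsRegularDigraph n d X) (w : Fin n) :
    (Nout X w).card = d := by
  rw [Nout, Finset.card_image_of_injOn, (hX.2 w).1]
  intro p hp q hq he
  obtain ⟨-, hp1⟩ := Finset.mem_filter.1 hp
  obtain ⟨-, hq1⟩ := Finset.mem_filter.1 hq
  exact Prod.ext (hp1.trans hq1.symm) he

/-- counting: escape vertex for the 2-switch in the shared-chord case -/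
lemma exists_out_escape {X : Finset (Arc n)} (hX : IsRegularDigraph n d X)
    {u w v1 v2 : Fin n} (hv : v1 ≠ v2)
    (h1 : (w,v1) ∈ X) (h2 : (w,v2) ∈ X) (h3 : (u,v1) ∉ X) (h4 : (u,v2) ∉ X) :
    ∃ v, (u,v) ∈ X ∧ (w,v) ∉ X ∧ v ≠ w := by
  by_contra hc
  push_neg at hc
  have hsub : Nout X u ⊆ (insert w (Nout X w)) \ {v1, v2} := by
    intro v hvmem
    have hvX : (u,v) ∈ X := mem_Nout.1 hvmem
    simp only [Finset.mem_sdiff, Finset.mem_insert, Finset.mem_singleton]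
    constructor
    · by_cases e : v = w
      · exact Or.inl e
      · exact Or.inr (mem_Nout.2 (by
          by_contra hcc
          exact e (hc v hvX hcc)))
    · rintro (rfl | rfl)
      · exact h3 hvX
      · exact h4 hvX
  have hwn : w ∉ Nout X w := by
    intro hm
    exact (hX.1 _ (mem_Nout.1 hm)) rfl
  have hpair : ({v1, v2} : Finset (Fin n)) ⊆ insert w (Nout X w) := by
    intro v hvm
    rw [Finset.mem_insert, Finset.mem_singleton] at hvm
    rcases hvm with rfl | rfl
    · exact Finset.mem_insert.2 (Or.inr (mem_Nout.2 h1))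
    · exact Finset.mem_insert.2 (Or.inr (mem_Nout.2 h2))
  have hcard := Finset.card_le_card hsub
  rw [Finset.card_sdiff_of_subset hpair, Finset.card_insert_of_notMem hwn,
      card_Nout hX, card_Nout hX] at hcard
  have hc2 : ({v1, v2} : Finset (Fin n)).card = 2 := by
    rw [Finset.card_insert_of_notMem (by simpa using hv), Finset.card_singleton]
  rw [hc2] at hcard
  have hd : 1 ≤ d := by
    rw [← card_Nout hX w]
    exact Finset.card_pos.2 ⟨v1, mem_Nout.2 h1⟩
  omega

lemma win_gen' (Z X : Omega n d) (m : ℕ) (hm : 3 ≤ m) (hmeq : m = mW Z.1 X.1)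
    (t h : ℕ → Fin n)
    (hpt : ∀ x, t (x+m) = t x) (hph : ∀ x, h (x+m) = h x)
    (hb : ∀ x, (t x, h x) ∈ X.1 ∧ (t x, h x) ∉ Z.1)
    (hr : ∀ x, (t (x+1), h x) ∈ Z.1 ∧ (t (x+1), h x) ∉ X.1)
    (a : ℕ) (hne : t a ≠ h (a+1)) : Win Z X := by
  have ea := hb a
  have ea1 := hb (a+1)
  have ra := hr a
  have ra1 := hr (a+1)
  have d1 : t a ≠ h a := loopfree X.2 ea.1
  have d2 : t (a+1) ≠ h (a+1) := loopfree X.2 ea1.1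
  have d3 : t a ≠ t (a+1) := fun e => ra.2 (by rw [← e]; exact ea.1)
  have d4 : h a ≠ h (a+1) := fun e => ra.2 (by rw [e]; exact ea1.1)
  have d5 : h a ≠ t (a+1) := (loopfree Z.2 ra.1).symm
  have d6 : t (a+2) ≠ h (a+1) := loopfree Z.2 ra1.1
  by_cases hch : (t a, h (a+1)) ∈ X.1
  · by_cases hchT : (t a, h (a+1)) ∈ Z.1
    · -- shared chord : type S
      have du : t (a+2) ≠ t a := fun e => ra1.2 (by rw [e]; exact hch)
      have du1 : t (a+2) ≠ t (a+1) := fun e => ra1.2 (by rw [e]; exact ea1.1)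
      by_cases hu : (t (a+2), h a) ∈ X.1
      · -- single switch win
        obtain ⟨Y, hY, hrel⟩ := reach_one X (t (a+2)) (h a) (t (a+1)) (h (a+1))
          hu ea1.1 ra1.2 ra.2 du1 d6 d5 d4
        refine ⟨Y, Relation.ReflTransGen.single hrel, ?_⟩
        apply mu_lt_of_phi_lt Y.2 Z.2
        have hp := Phi_swSet (T := Z.1) hu ea1.1 ra1.2 ra.2 du1
        simp only [if_neg ea1.2, if_pos ra1.1, if_pos ra.1] at hp
        rw [hY]
        by_cases huT : (t (a+2), h a) ∈ Z.1 <;>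
          simp only [if_pos, if_neg, huT, if_true, if_false] at hp <;> omega
      · -- counting, 2-switch win
        obtain ⟨v, hv1, hv2, hv3⟩ := exists_out_escape X.2 d4 ea.1 hch hu ra1.2
        have dv1 : v ≠ h (a+1) := fun e => hv2 (by rw [e]; exact hch)
        have dv2 : t (a+2) ≠ v := loopfree X.2 hv1
        obtain ⟨Y1, hY1, rel1⟩ := reach_one X (t a) (h (a+1)) (t (a+2)) v
          hch hv1 hv2 ra1.2 du.symm hv3.symm d6.symm dv1.symm
        -- memberships in X1
        have m1 : (t a, h a) ∈ Y1.1 := by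
          rw [hY1]; exact mem_sw ea.1 (pne2 d4) (pne1 du.symm)
        have m2 : (t (a+1), h (a+1)) ∈ Y1.1 := by
          rw [hY1]; exact mem_sw ea1.1 (pne1 d3.symm) (pne1 du1.symm)
        have m3 : (t a, h (a+1)) ∉ Y1.1 := by
          rw [hY1]; exact notMem_sw_ij dv1.symm du.symm
        have m4 : (t (a+1), h a) ∉ Y1.1 := by
          rw [hY1]; exact notMem_sw ra.2 (pne1 d3.symm) (pne2 d4)
        obtain ⟨Y2, hY2, rel2⟩ := reach_one Y1 (t a) (h a) (t (a+1)) (h (a+1))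
          m1 m2 m3 m4 d3 hne d5 d4
        refine ⟨Y2, Relation.ReflTransGen.tail (Relation.ReflTransGen.single rel1) rel2, ?_⟩
        apply mu_lt_of_phi_lt Y2.2 Z.2
        have hp1 := Phi_swSet (T := Z.1) hch hv1 hv2 ra1.2 du.symm
        have hp2 := Phi_swSet (T := Z.1) m1 m2 m3 m4 d3
        rw [hY1] at hp2
        rw [hY2, hY1]
        simp only [if_pos hchT, if_pos ra1.1, if_pos ra.1, if_neg ea.2, if_neg ea1.2] at hp1 hp2
        by_cases c1 : (t (a+2), v) ∈ Z.1 <;> by_cases c2 : (t a, v) ∈ Z.1 <;>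
          simp only [c1, c2, if_true, if_false] at hp1 hp2 <;> omega
    · -- blue chord: contradicts minimality
      exfalso
      have hwin : Wlk Z.1 X.1 (m-1) := by
        apply wlk_of_window (L := m-1) (by omega)
          (fun r => if r = 0 then t a else t (a+1+r)) (fun r => h (a+1+r))
        · intro r hrL
          by_cases hr0 : r = 0
          · subst hr0
            simp only [if_pos rfl, Nat.add_zero]
            exact ⟨hch, hchT⟩
          · simp only [if_neg hr0]
            exact hb (a+1+r)
        · intro r hrL
          have : ¬ (r + 1 = 0) := by omega
          simp only [if_neg this]
          exact hr (a+1+r)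
        · simp only [if_pos rfl]
          have e1 : a+1+(m-1-1) = a+m-1 := by omega
          have e2 : a+m-1+1 = a+m := by omega
          have := hr (a+m-1)
          rw [e2, hpt a] at this
          rw [e1]
          exact this
      have := mW_le_of_wlk (by omega : 1 ≤ m-1) hwin
      omega
  · -- chord absent: direct switch
    obtain ⟨Y, hY, hrel⟩ := reach_one X (t a) (h a) (t (a+1)) (h (a+1))
      ea.1 ea1.1 hch ra.2 d3 hne d5 d4
    refine ⟨Y, Relation.ReflTransGen.single hrel, ?_⟩
    apply mu_lt_of_phi_lt Y.2 Z.2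
    have hp := Phi_swSet (T := Z.1) ea.1 ea1.1 hch ra.2 d3
    simp only [if_neg ea.2, if_neg ea1.2, if_pos ra.1] at hp
    rw [hY]
    by_cases hT : (t a, h (a+1)) ∈ Z.1 <;>
      simp only [hT, if_true, if_false] at hp <;> omega

lemma win_ac (Z X : Omega n d) (m : ℕ) (hm : 4 ≤ m) (hmeq : m = mW Z.1 X.1)
    (t : ℕ → Fin n) (hpt : ∀ x, t (x+m) = t x)
    (hbf : ∀ x, (t (x+1), t x) ∈ X.1 ∧ (t (x+1), t x) ∉ Z.1)
    (hrf : ∀ x, (t (x+2), t x) ∈ Z.1 ∧ (t (x+2), t x) ∉ X.1) : Win Z X := by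
  have hmin : ∀ L, 1 ≤ L → L < m → ¬ Wlk Z.1 X.1 L := by
    intro L h1 h2 hw
    have := mW_le_of_wlk h1 hw
    omega
  -- find a position where period-3 fails
  have hex : ∃ a, t (a+3) ≠ t a := by
    by_contra hcon
    push_neg at hcon
    apply hmin 3 (by omega) (by omega)
    apply wlk_of_window (L := 3) (by omega) (fun r => t (r+1)) (fun r => t r)
    · intro r _
      exact hbf r
    · intro r _
      exact hrf r
    · have h2 := hrf 2
      rw [show (2:ℕ)+2 = 1+3 from rfl, hcon 1] at h2
      exact h2
  obtain ⟨a₀, hgood0⟩ := hex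
  set τ : ℕ → Fin n := fun i => t (a₀ + i) with hτ
  have bf : ∀ i, (τ (i+1), τ i) ∈ X.1 ∧ (τ (i+1), τ i) ∉ Z.1 := fun i => hbf (a₀+i)
  have rf : ∀ i, (τ (i+2), τ i) ∈ Z.1 ∧ (τ (i+2), τ i) ∉ X.1 := fun i => hrf (a₀+i)
  have pt : ∀ i, τ (i+m) = τ i := by
    intro i
    show t (a₀ + (i+m)) = t (a₀ + i)
    have e : a₀ + (i+m) = (a₀+i) + m := by omega
    rw [e]
    exact hpt (a₀+i)
  have hgood : τ 3 ≠ τ 0 := hgood0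
  -- blue-arc and red-arc injectivity along the walk
  have binj : ∀ x s, 1 ≤ s → s < m →
      (τ (x+s+1), τ (x+s)) ≠ (τ (x+1), τ x) := by
    intro x s hs1 hsm heq
    apply hmin s hs1 hsm
    apply wlk_of_window (L := s) hs1 (fun r => τ (x+r+1)) (fun r => τ (x+r))
    · intro r _
      exact ⟨(bf (x+r)).1, (bf (x+r)).2⟩
    · intro r _
      exact rf (x+r)
    · have h2 := rf (x+(s-1))
      rw [show x+(s-1)+2 = x+s+1 from by omega,
          show τ (x+s+1) = τ (x+1) from congrArg Prod.fst heq] at h2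
      exact h2
  have rinj : ∀ x s, 1 ≤ s → s < m →
      (τ (x+s+2), τ (x+s)) ≠ (τ (x+2), τ x) := by
    intro x s hs1 hsm heq
    apply hmin s hs1 hsm
    apply wlk_of_window (L := s) hs1 (fun r => τ (x+r+2)) (fun r => τ (x+r+1))
    · intro r _
      exact bf (x+r+1)
    · intro r _
      exact rf (x+r+1)
    · have h2 := rf (x+s)
      rw [show τ (x+s+2) = τ (x+2) from congrArg Prod.fst heq] at h2
      have e : x+(s-1)+1 = x+s := by omega
      rw [← e] at h2
      exact h2
  -- the wrap-around red arc
  have Dlast : (τ 1, τ (m-1)) ∈ Z.1 ∧ (τ 1, τ (m-1)) ∉ X.1 := by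
    have h2 := rf (m-1)
    rw [show m-1+2 = 1+m from by omega] at h2
    rwa [pt 1] at h2

  have bf0 : (τ 1, τ 0) ∈ X.1 ∧ (τ 1, τ 0) ∉ Z.1 := bf 0
  have bf1 : (τ 2, τ 1) ∈ X.1 ∧ (τ 2, τ 1) ∉ Z.1 := bf 1
  have bf2 : (τ 3, τ 2) ∈ X.1 ∧ (τ 3, τ 2) ∉ Z.1 := bf 2
  have bf3 : (τ 4, τ 3) ∈ X.1 ∧ (τ 4, τ 3) ∉ Z.1 := bf 3
  have rf0 : (τ 2, τ 0) ∈ Z.1 ∧ (τ 2, τ 0) ∉ X.1 := rf 0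
  have rf1 : (τ 3, τ 1) ∈ Z.1 ∧ (τ 3, τ 1) ∉ X.1 := rf 1
  have rf2 : (τ 4, τ 2) ∈ Z.1 ∧ (τ 4, τ 2) ∉ X.1 := rf 2
  -- basic distinctions
  have d10 : τ 1 ≠ τ 0 := loopfree X.2 bf0.1
  have d21 : τ 2 ≠ τ 1 := loopfree X.2 bf1.1
  have d32 : τ 3 ≠ τ 2 := loopfree X.2 bf2.1
  have d43 : τ 4 ≠ τ 3 := loopfree X.2 bf3.1
  have d20 : τ 2 ≠ τ 0 := loopfree Z.2 rf0.1
  have d31 : τ 3 ≠ τ 1 := loopfree Z.2 rf1.1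
  have d42 : τ 4 ≠ τ 2 := loopfree Z.2 rf2.1
  by_cases hA : (τ 3, τ 0) ∈ X.1
  · -- single switch win using the (τ3,τ0) arc
    obtain ⟨Y, hY, hrel⟩ := reach_one X (τ 2) (τ 1) (τ 3) (τ 0)
      bf1.1 hA rf0.2 rf1.2 d32.symm d20 d31.symm d10
    refine ⟨Y, Relation.ReflTransGen.single hrel, ?_⟩
    apply mu_lt_of_phi_lt Y.2 Z.2
    have hp := Phi_swSet (T := Z.1) bf1.1 hA rf0.2 rf1.2 d32.symm
    simp only [if_neg bf1.2, if_pos rf0.1, if_pos rf1.1] at hp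
    rw [hY]
    by_cases c1 : (τ 3, τ 0) ∈ Z.1 <;> simp only [c1, if_true, if_false] at hp <;> omega
  · by_cases hrev : (τ 1, τ 2) ∈ X.1
    · have d12 : τ 1 ≠ τ 2 := loopfree X.2 hrev
      by_cases hrevT : (τ 1, τ 2) ∈ Z.1
      · -- rev is shared
        have d14 : τ 1 ≠ τ 4 := fun e => rf2.2 (by rw [← e]; exact hrev)
        by_cases hD1 : (τ 1, τ 3) ∈ X.1
        · -- D-chain
          have chain : ∀ j k, 1 ≤ k → k ≤ m-3 → m-3-k ≤ j →
              (τ 1, τ (k+2)) ∈ X.1 → Win Z X := by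
            intro j
            induction j with
            | zero =>
              intro k hk1 hk2 hkj hD
              have hk : k = m-3 := by omega
              subst hk
              refine absurd hD ?_
              have hd := Dlast.2
              rwa [show m-1 = m-3+2 from by omega] at hd
            | succ j ih =>
              intro k hk1 hk2 hkj hD
              by_cases hkm : k = m-3
              · subst hkm
                refine absurd hD ?_
                have hd := Dlast.2
                rwa [show m-1 = m-3+2 from by omega] at hd
              · have hk4 : k ≤ m-4 := by omega
                have bfk2 : (τ (k+3), τ (k+2)) ∈ X.1 ∧ (τ (k+3), τ (k+2)) ∉ Z.1 := bf (k+2)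
                have bfk3 : (τ (k+4), τ (k+3)) ∈ X.1 ∧ (τ (k+4), τ (k+3)) ∉ Z.1 := bf (k+3)
                have rfk2 : (τ (k+4), τ (k+2)) ∈ Z.1 ∧ (τ (k+4), τ (k+2)) ∉ X.1 := rf (k+2)
                have dC : τ (k+3) ≠ τ (k+2) := loopfree X.2 bfk2.1
                have dD : τ (k+4) ≠ τ (k+2) := loopfree Z.2 rfk2.1
                have d1k4 : τ 1 ≠ τ (k+4) := fun e => rfk2.2 (by rw [← e]; exact hD)
                by_cases hDT : (τ 1, τ (k+2)) ∈ Z.1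
                · by_cases hD1X : (τ 1, τ (k+3)) ∈ X.1
                  · exact ih (k+1) (by omega) (by omega) (by omega) hD1X
                  · have d1k3 : τ 1 ≠ τ (k+3) :=
                      fun e => bfk2.2 (by rw [← e]; exact hDT)
                    obtain ⟨Y1, hY1, rel1⟩ := reach_one X (τ 1) (τ (k+2)) (τ (k+4)) (τ (k+3))
                      hD bfk3.1 hD1X rfk2.2 d1k4 d1k3 dD.symm dC.symm
                    by_cases hD1T : (τ 1, τ (k+3)) ∈ Z.1
                    · refine ⟨Y1, Relation.ReflTransGen.single rel1, ?_⟩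
                      apply mu_lt_of_phi_lt Y1.2 Z.2
                      have hp := Phi_swSet (T := Z.1) hD bfk3.1 hD1X rfk2.2 d1k4
                      simp only [if_pos hDT, if_neg bfk3.2, if_pos hD1T,
                        if_pos rfk2.1] at hp
                      rw [hY1]
                      omega
                    · -- plateau step
                      have hknm4 : k ≠ m-4 := by
                        intro e
                        apply hD1T
                        have hd := Dlast.1
                        rwa [show m-1 = k+3 from by omega] at hd
                      have hk5 : k ≤ m-5 := by omega
                      refine ⟨Y1, Relation.ReflTransGen.single rel1, ?_⟩
                      have hphiEq : Phi Z.1 Y1.1 = Phi Z.1 X.1 := by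
                        have hp := Phi_swSet (T := Z.1) hD bfk3.1 hD1X rfk2.2 d1k4
                        simp only [if_pos hDT, if_neg bfk3.2, if_neg hD1T,
                          if_pos rfk2.1] at hp
                        rw [hY1]
                        omega
                      apply mu_lt_of_plateau hphiEq
                        (L := m-k-3) ?_ (by omega) (by rw [← hmeq]; omega)
                      apply wlk_of_window (L := m-k-3) (by omega)
                        (fun r => if r = 0 then τ 1 else τ (k+3+r+1)) (fun r => τ (k+3+r))
                      · intro r hrL
                        by_cases h0 : r = 0
                        · subst h0
                          simp only [if_pos rfl]
                          refine ⟨?_, hD1T⟩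
                          rw [hY1]
                          exact mem_sw_il
                        · simp only [if_neg h0]
                          refine ⟨?_, (bf (k+3+r)).2⟩
                          rw [hY1]
                          apply mem_sw (bf (k+3+r)).1
                          · intro e; exact (bf (k+3+r)).2 (by rw [e]; exact hDT)
                          · exact binj (k+3) r (by omega) (by omega)
                      · intro r hrL
                        have h0 : ¬ (r+1 = 0) := by omega
                        simp only [if_neg h0]
                        refine ⟨(rf (k+3+r)).1, ?_⟩
                        rw [hY1]
                        apply notMem_sw (rf (k+3+r)).2
                        · intro e; exact hD1T (by rw [← e]; exact (rf (k+3+r)).1)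
                        · have hri := rinj (k+2) (r+1) (by omega) (by omega)
                          rw [show k+2+(r+1) = k+3+r from by omega] at hri
                          exact hri
                      · simp only [if_pos rfl]
                        rw [show k+3+(m-k-3-1) = m-1 from by omega]
                        refine ⟨Dlast.1, ?_⟩
                        rw [hY1]
                        apply notMem_sw Dlast.2
                        · intro e; exact hD1T (by rw [← e]; exact Dlast.1)
                        · have hri := rinj (k+2) (m-k-3) (by omega) (by omega)
                          rw [show k+2+(m-k-3) = m-1 from by omega] at hri
                          rw [show m-1+2 = 1+m from by omega, pt 1] at hri
                          exact hri
                · -- D_k blue: shorter walk, contradiction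
                  exfalso
                  apply hmin (m-k-2) (by omega) (by omega)
                  apply wlk_of_window (L := m-k-2) (by omega)
                    (fun r => if r = 0 then τ 1 else τ (k+2+r+1)) (fun r => τ (k+2+r))
                  · intro r hrL
                    by_cases h0 : r = 0
                    · subst h0
                      simp only [if_pos rfl]
                      exact ⟨hD, hDT⟩
                    · simp only [if_neg h0]
                      exact bf (k+2+r)
                  · intro r hrL
                    have h0 : ¬ (r+1 = 0) := by omega
                    simp only [if_neg h0]
                    exact rf (k+2+r)
                  · simp only [if_pos rfl]
                    rw [show k+2+(m-k-2-1) = m-1 from by omega]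
                    exact Dlast
          exact chain m 1 (by omega) (by omega) (by omega) hD1
        · -- WIN2' : rev shared, (τ1,τ3) absent
          obtain ⟨Y1, hY1, rel1⟩ := reach_one X (τ 1) (τ 2) (τ 4) (τ 3)
            hrev bf3.1 hD1 rf2.2 d14 d31.symm d42.symm d32.symm
          by_cases hD1T : (τ 1, τ 3) ∈ Z.1
          · refine ⟨Y1, Relation.ReflTransGen.single rel1, ?_⟩
            apply mu_lt_of_phi_lt Y1.2 Z.2
            have hp := Phi_swSet (T := Z.1) hrev bf3.1 hD1 rf2.2 d14
            simp only [if_pos hrevT, if_neg bf3.2, if_pos hD1T, if_pos rf2.1] at hp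
            rw [hY1]
            omega
          · -- plateau then finish
            have m1 : (τ 1, τ 0) ∈ Y1.1 := by
              rw [hY1]; exact mem_sw bf0.1 (pne2 d20.symm) (pne1 d14)
            have m2 : (τ 3, τ 2) ∈ Y1.1 := by
              rw [hY1]; exact mem_sw bf2.1 (pne1 d31) (pne1 d43.symm)
            have m3 : (τ 1, τ 2) ∉ Y1.1 := by
              rw [hY1]; exact notMem_sw_ij d32.symm d14
            have m4 : (τ 3, τ 0) ∉ Y1.1 := by
              rw [hY1]; exact notMem_sw hA (pne1 d31) (pne1 d43.symm)
            obtain ⟨Y2, hY2, rel2⟩ := reach_one Y1 (τ 1) (τ 0) (τ 3) (τ 2)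
              m1 m2 m3 m4 d31.symm d12 hgood.symm d20.symm
            refine ⟨Y2, Relation.ReflTransGen.tail (Relation.ReflTransGen.single rel1) rel2, ?_⟩
            apply mu_lt_of_phi_lt Y2.2 Z.2
            have hp1 := Phi_swSet (T := Z.1) hrev bf3.1 hD1 rf2.2 d14
            have hp2 := Phi_swSet (T := Z.1) m1 m2 m3 m4 d31.symm
            rw [hY1] at hp2
            rw [hY2, hY1]
            simp only [if_pos hrevT, if_neg bf3.2, if_neg hD1T, if_pos rf2.1,
              if_neg bf0.2, if_neg bf2.2] at hp1 hp2
            by_cases c1 : (τ 3, τ 0) ∈ Z.1 <;>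
              simp only [c1, if_true, if_false] at hp1 hp2 <;> omega
      · -- rev blue: shorter walk, contradiction
        exfalso
        apply hmin (m-2) (by omega) (by omega)
        apply wlk_of_window (L := m-2) (by omega)
          (fun r => if r = 0 then τ 1 else τ (2+r+1)) (fun r => τ (2+r))
        · intro r hrL
          by_cases h0 : r = 0
          · subst h0
            simp only [if_pos rfl]
            exact ⟨hrev, hrevT⟩
          · simp only [if_neg h0]
            exact bf (2+r)
        · intro r hrL
          have h0 : ¬ (r+1 = 0) := by omega
          simp only [if_neg h0]
          exact rf (2+r)
        · simp only [if_pos rfl]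
          rw [show 2+(m-2-1) = m-1 from by omega]
          exact Dlast
    · -- WIN2 : rev absent
      obtain ⟨Y1, hY1, rel1⟩ := reach_one X (τ 3) (τ 2) (τ 1) (τ 0)
        bf2.1 bf0.1 hA hrev d31 hgood d21 d20
      have m1 : (τ 3, τ 0) ∈ Y1.1 := by
        rw [hY1]; exact mem_sw_il
      have m2 : (τ 2, τ 1) ∈ Y1.1 := by
        rw [hY1]; exact mem_sw bf1.1 (pne1 d32.symm) (pne1 d21)
      have m3 : (τ 3, τ 1) ∉ Y1.1 := by
        rw [hY1]; exact notMem_sw rf1.2 (pne2 d10) (pne1 d31)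
      have m4 : (τ 2, τ 0) ∉ Y1.1 := by
        rw [hY1]; exact notMem_sw rf0.2 (pne1 d32.symm) (pne1 d21)
      obtain ⟨Y2, hY2, rel2⟩ := reach_one Y1 (τ 3) (τ 0) (τ 2) (τ 1)
        m1 m2 m3 m4 d32 d31 d20.symm d10.symm
      refine ⟨Y2, Relation.ReflTransGen.tail (Relation.ReflTransGen.single rel1) rel2, ?_⟩
      apply mu_lt_of_phi_lt Y2.2 Z.2
      have hp1 := Phi_swSet (T := Z.1) bf2.1 bf0.1 hA hrev d31
      have hp2 := Phi_swSet (T := Z.1) m1 m2 m3 m4 d32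
      rw [hY1] at hp2
      rw [hY2, hY1]
      simp only [if_neg bf2.2, if_neg bf0.2, if_neg bf1.2,
        if_pos rf1.1, if_pos rf0.1] at hp1 hp2
      by_cases c1 : (τ 3, τ 0) ∈ Z.1 <;> by_cases c2 : (τ 1, τ 2) ∈ Z.1 <;>
        simp only [c1, c2, if_true, if_false] at hp1 hp2 <;> omega

section Tri
variable {Z X : Omega n d} {a b c x y q : Fin n}

/-- common hypotheses for the triangle lemmas -/
def TriH (Z X : Omega n d) (a b c : Fin n) : Prop :=
  ((a,b) ∈ X.1 ∧ (a,b) ∉ Z.1) ∧ ((b,c) ∈ X.1 ∧ (b,c) ∉ Z.1) ∧ ((c,a) ∈ X.1 ∧ (c,a) ∉ Z.1) ∧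
  ((b,a) ∈ Z.1 ∧ (b,a) ∉ X.1) ∧ ((c,b) ∈ Z.1 ∧ (c,b) ∉ X.1) ∧ ((a,c) ∈ Z.1 ∧ (a,c) ∉ X.1)

lemma triH_rot {Z X : Omega n d} {a b c : Fin n} (H : TriH Z X a b c) : TriH Z X b c a := by
  obtain ⟨h1,h2,h3,h4,h5,h6⟩ := H
  exact ⟨h2,h3,h1,h5,h6,h4⟩

/-- Out-pattern {a}: (x,a) ∈ X, (x,b) ∉ X, (x,c) ∉ X -/
lemma tri_Osing (H : TriH Z X a b c)
    (dxa : x ≠ a) (dxb : x ≠ b) (dxc : x ≠ c)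
    (h1 : (x,a) ∈ X.1) (h2 : (x,b) ∉ X.1) (h3 : (x,c) ∉ X.1) : Win Z X := by
  obtain ⟨Hab, Hbc, Hca, Hba, Hcb, Hac⟩ := H
  have dab : a ≠ b := loopfree X.2 Hab.1
  have dbc : b ≠ c := loopfree X.2 Hbc.1
  have dca : c ≠ a := loopfree X.2 Hca.1
  obtain ⟨Y1, hY1, r1⟩ := reach_one X b c x a
    Hbc.1 h1 Hba.2 h3 dxb.symm dab.symm dxc.symm dca
  have m1 : (a,b) ∈ Y1.1 := by
    rw [hY1]; exact mem_sw Hab.1 (pne1 dab) (pne1 dxa.symm)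
  have m2 : (x,c) ∈ Y1.1 := by rw [hY1]; exact mem_sw_kj
  have m3 : (a,c) ∉ Y1.1 := by
    rw [hY1]; exact notMem_sw Hac.2 (pne1 dab) (pne1 dxa.symm)
  have m4 : (x,b) ∉ Y1.1 := by
    rw [hY1]; exact notMem_sw h2 (pne1 dxb) (pne2 dbc)
  obtain ⟨Y2, hY2, r2⟩ := reach_one Y1 a b x c
    m1 m2 m3 m4 dxa.symm dca.symm dxb.symm dbc
  have m5 : (c,a) ∈ Y2.1 := by
    rw [hY2, hY1]
    exact mem_sw (mem_sw Hca.1 (pne1 dbc.symm) (pne1 dxc.symm)) (pne1 dca) (pne1 dxc.symm)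
  have m6 : (x,b) ∈ Y2.1 := by rw [hY2]; exact mem_sw_kj
  have m7 : (c,b) ∉ Y2.1 := by
    rw [hY2, hY1]
    exact notMem_sw (notMem_sw Hcb.2 (pne1 dbc.symm) (pne1 dxc.symm))
      (pne1 dca) (pne1 dxc.symm)
  have m8 : (x,a) ∉ Y2.1 := by
    rw [hY2, hY1]
    exact notMem_sw (notMem_sw_kl dxb dca.symm) (pne1 dxa) (pne2 dab)
  obtain ⟨Y3, hY3, r3⟩ := reach_one Y2 c a x b
    m5 m6 m7 m8 dxc.symm dbc.symm dxa.symm dab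
  refine ⟨Y3, Relation.ReflTransGen.tail (Relation.ReflTransGen.tail
    (Relation.ReflTransGen.single r1) r2) r3, ?_⟩
  apply mu_lt_of_phi_lt Y3.2 Z.2
  have hp1 := Phi_swSet (T := Z.1) Hbc.1 h1 Hba.2 h3 dxb.symm
  have hp2 := Phi_swSet (T := Z.1) m1 m2 m3 m4 dxa.symm
  have hp3 := Phi_swSet (T := Z.1) m5 m6 m7 m8 dxc.symm
  rw [hY1] at hp2
  rw [hY2, hY1] at hp3
  rw [hY3, hY2, hY1]
  simp only [if_neg Hbc.2, if_pos Hba.1, if_neg Hab.2, if_pos Hac.1,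
    if_neg Hca.2, if_pos Hcb.1] at hp1 hp2 hp3
  omega

/-- Out-pattern {a,b}: (x,a) ∈ X, (x,b) ∈ X, (x,c) ∉ X -/
lemma tri_Opair (H : TriH Z X a b c)
    (dxa : x ≠ a) (dxb : x ≠ b) (dxc : x ≠ c)
    (h1 : (x,a) ∈ X.1) (h2 : (x,b) ∈ X.1) (h3 : (x,c) ∉ X.1) : Win Z X := by
  obtain ⟨Hab, Hbc, Hca, Hba, Hcb, Hac⟩ := H
  have dab : a ≠ b := loopfree X.2 Hab.1
  have dbc : b ≠ c := loopfree X.2 Hbc.1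
  have dca : c ≠ a := loopfree X.2 Hca.1
  -- S1 : remove (b,c),(x,a) add (b,a),(x,c)
  obtain ⟨Y1, hY1, r1⟩ := reach_one X b c x a
    Hbc.1 h1 Hba.2 h3 dxb.symm dab.symm dxc.symm dca
  -- S2 : remove (c,a),(x,b) add (c,b),(x,a)
  have m1 : (c,a) ∈ Y1.1 := by
    rw [hY1]; exact mem_sw Hca.1 (pne1 dbc.symm) (pne1 dxc.symm)
  have m2 : (x,b) ∈ Y1.1 := by
    rw [hY1]; exact mem_sw h2 (pne1 dxb) (pne2 dab.symm)
  have m3 : (c,b) ∉ Y1.1 := by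
    rw [hY1]; exact notMem_sw Hcb.2 (pne1 dbc.symm) (pne1 dxc.symm)
  have m4 : (x,a) ∉ Y1.1 := by
    rw [hY1]; exact notMem_sw_kl dxb dca.symm
  obtain ⟨Y2, hY2, r2⟩ := reach_one Y1 c a x b
    m1 m2 m3 m4 dxc.symm dbc.symm dxa.symm dab
  -- S3 : remove (a,b),(x,c) add (a,c),(x,b)
  have m5 : (a,b) ∈ Y2.1 := by
    rw [hY2, hY1]
    exact mem_sw (mem_sw Hab.1 (pne1 dab) (pne1 dxa.symm)) (pne1 dca.symm) (pne1 dxa.symm)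
  have m6 : (x,c) ∈ Y2.1 := by
    rw [hY2, hY1]
    exact mem_sw mem_sw_kj (pne1 dxc) (pne2 dbc.symm)
  have m7 : (a,c) ∉ Y2.1 := by
    rw [hY2, hY1]
    exact notMem_sw (notMem_sw Hac.2 (pne1 dab) (pne1 dxa.symm))
      (pne1 dca.symm) (pne1 dxa.symm)
  have m8 : (x,b) ∉ Y2.1 := by
    rw [hY2]; exact notMem_sw_kl dxc dab.symm
  obtain ⟨Y3, hY3, r3⟩ := reach_one Y2 a b x c
    m5 m6 m7 m8 dxa.symm dca.symm dxb.symm dbc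
  refine ⟨Y3, Relation.ReflTransGen.tail (Relation.ReflTransGen.tail
    (Relation.ReflTransGen.single r1) r2) r3, ?_⟩
  apply mu_lt_of_phi_lt Y3.2 Z.2
  have hp1 := Phi_swSet (T := Z.1) Hbc.1 h1 Hba.2 h3 dxb.symm
  have hp2 := Phi_swSet (T := Z.1) m1 m2 m3 m4 dxc.symm
  have hp3 := Phi_swSet (T := Z.1) m5 m6 m7 m8 dxa.symm
  rw [hY1] at hp2
  rw [hY2, hY1] at hp3
  rw [hY3, hY2, hY1]
  simp only [if_neg Hbc.2, if_pos Hba.1, if_neg Hab.2, if_pos Hac.1,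
    if_neg Hca.2, if_pos Hcb.1] at hp1 hp2 hp3
  omega

/-- In-pattern {a}: (a,x) ∈ X, (b,x) ∉ X, (c,x) ∉ X -/
lemma tri_Ising (H : TriH Z X a b c)
    (dxa : x ≠ a) (dxb : x ≠ b) (dxc : x ≠ c)
    (h1 : (a,x) ∈ X.1) (h2 : (b,x) ∉ X.1) (h3 : (c,x) ∉ X.1) : Win Z X := by
  obtain ⟨Hab, Hbc, Hca, Hba, Hcb, Hac⟩ := H
  have dab : a ≠ b := loopfree X.2 Hab.1
  have dbc : b ≠ c := loopfree X.2 Hbc.1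
  have dca : c ≠ a := loopfree X.2 Hca.1
  -- S1 : remove (a,x),(b,c) add (a,c),(b,x)
  obtain ⟨Y1, hY1, r1⟩ := reach_one X a x b c
    h1 Hbc.1 Hac.2 h2 dab dca.symm dxb dxc
  -- S2 : remove (c,a),(b,x) add (c,x),(b,a)
  have m1 : (c,a) ∈ Y1.1 := by
    rw [hY1]; exact mem_sw Hca.1 (pne1 dca) (pne1 dbc.symm)
  have m2 : (b,x) ∈ Y1.1 := by rw [hY1]; exact mem_sw_kj
  have m3 : (c,x) ∉ Y1.1 := by
    rw [hY1]; exact notMem_sw h3 (pne1 dca) (pne1 dbc.symm)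
  have m4 : (b,a) ∉ Y1.1 := by
    rw [hY1]; exact notMem_sw Hba.2 (pne1 dab.symm) (pne2 dxa.symm)
  obtain ⟨Y2, hY2, r2⟩ := reach_one Y1 c a b x
    m1 m2 m3 m4 dbc.symm dxc.symm dab dxa.symm
  -- S3 : remove (a,b),(c,x) add (a,x),(c,b)
  have m5 : (a,b) ∈ Y2.1 := by
    rw [hY2, hY1]
    exact mem_sw (mem_sw Hab.1 (pne2 dxb.symm) (pne1 dab)) (pne1 dca.symm) (pne1 dab)
  have m6 : (c,x) ∈ Y2.1 := by rw [hY2]; exact mem_sw_il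
  have m7 : (a,x) ∉ Y2.1 := by
    rw [hY2, hY1]
    exact notMem_sw (notMem_sw_ij dxc dab) (pne1 dca.symm) (pne1 dab)
  have m8 : (c,b) ∉ Y2.1 := by
    rw [hY2, hY1]
    exact notMem_sw (notMem_sw Hcb.2 (pne1 dca) (pne1 dbc.symm))
      (pne2 dxb.symm) (pne1 dbc.symm)
  obtain ⟨Y3, hY3, r3⟩ := reach_one Y2 a b c x
    m5 m6 m7 m8 dca.symm dxa.symm dbc dxb.symm
  refine ⟨Y3, Relation.ReflTransGen.tail (Relation.ReflTransGen.tail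
    (Relation.ReflTransGen.single r1) r2) r3, ?_⟩
  apply mu_lt_of_phi_lt Y3.2 Z.2
  have hp1 := Phi_swSet (T := Z.1) h1 Hbc.1 Hac.2 h2 dab
  have hp2 := Phi_swSet (T := Z.1) m1 m2 m3 m4 dbc.symm
  have hp3 := Phi_swSet (T := Z.1) m5 m6 m7 m8 dca.symm
  rw [hY1] at hp2
  rw [hY2, hY1] at hp3
  rw [hY3, hY2, hY1]
  simp only [if_neg Hbc.2, if_pos Hba.1, if_neg Hab.2, if_pos Hac.1,
    if_neg Hca.2, if_pos Hcb.1] at hp1 hp2 hp3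
  omega

/-- In-pattern {a,b}: (a,x) ∈ X, (b,x) ∈ X, (c,x) ∉ X -/
lemma tri_Ipair (H : TriH Z X a b c)
    (dxa : x ≠ a) (dxb : x ≠ b) (dxc : x ≠ c)
    (h1 : (a,x) ∈ X.1) (h2 : (b,x) ∈ X.1) (h3 : (c,x) ∉ X.1) : Win Z X := by
  obtain ⟨Hab, Hbc, Hca, Hba, Hcb, Hac⟩ := H
  have dab : a ≠ b := loopfree X.2 Hab.1
  have dbc : b ≠ c := loopfree X.2 Hbc.1
  have dca : c ≠ a := loopfree X.2 Hca.1
  -- S1 : remove (c,a),(b,x) add (c,x),(b,a)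
  obtain ⟨Y1, hY1, r1⟩ := reach_one X c a b x
    Hca.1 h2 h3 Hba.2 dbc.symm dxc.symm dab dxa.symm
  -- S2 : remove (a,x),(b,c) add (a,c),(b,x)
  have m1 : (a,x) ∈ Y1.1 := by
    rw [hY1]; exact mem_sw h1 (pne1 dca.symm) (pne1 dab)
  have m2 : (b,c) ∈ Y1.1 := by
    rw [hY1]; exact mem_sw Hbc.1 (pne1 dbc) (pne2 dxc.symm)
  have m3 : (a,c) ∉ Y1.1 := by
    rw [hY1]; exact notMem_sw Hac.2 (pne1 dca.symm) (pne1 dab)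
  have m4 : (b,x) ∉ Y1.1 := by
    rw [hY1]; exact notMem_sw_kl dbc dxa
  obtain ⟨Y2, hY2, r2⟩ := reach_one Y1 a x b c
    m1 m2 m3 m4 dab dca.symm dxb dxc
  -- S3 : remove (c,x),(a,b) add (c,b),(a,x)
  have m5 : (c,x) ∈ Y2.1 := by
    rw [hY2, hY1]
    exact mem_sw mem_sw_il (pne1 dca) (pne1 dbc.symm)
  have m6 : (a,b) ∈ Y2.1 := by
    rw [hY2, hY1]
    exact mem_sw (mem_sw Hab.1 (pne1 dca.symm) (pne1 dab)) (pne2 dxb.symm) (pne1 dab)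
  have m7 : (c,b) ∉ Y2.1 := by
    rw [hY2, hY1]
    exact notMem_sw (notMem_sw Hcb.2 (pne2 dxb.symm) (pne1 dbc.symm))
      (pne1 dca) (pne1 dbc.symm)
  have m8 : (a,x) ∉ Y2.1 := by
    rw [hY2]; exact notMem_sw_ij dxc dab
  obtain ⟨Y3, hY3, r3⟩ := reach_one Y2 c x a b
    m5 m6 m7 m8 dca dbc.symm dxa dxb
  refine ⟨Y3, Relation.ReflTransGen.tail (Relation.ReflTransGen.tail
    (Relation.ReflTransGen.single r1) r2) r3, ?_⟩
  apply mu_lt_of_phi_lt Y3.2 Z.2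
  have hp1 := Phi_swSet (T := Z.1) Hca.1 h2 h3 Hba.2 dbc.symm
  have hp2 := Phi_swSet (T := Z.1) m1 m2 m3 m4 dab
  have hp3 := Phi_swSet (T := Z.1) m5 m6 m7 m8 dca
  rw [hY1] at hp2
  rw [hY2, hY1] at hp3
  rw [hY3, hY2, hY1]
  simp only [if_neg Hbc.2, if_pos Hba.1, if_neg Hab.2, if_pos Hac.1,
    if_neg Hca.2, if_pos Hcb.1] at hp1 hp2 hp3
  omega

/-- T3: x sends to all of the triangle, q receives from all of it, and (x,q) is absent. -/
lemma tri_T3 (H : TriH Z X a b c)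
    (dxa : x ≠ a) (dxb : x ≠ b) (dxc : x ≠ c)
    (dqa : q ≠ a) (dqb : q ≠ b) (dqc : q ≠ c) (dxq : x ≠ q)
    (hxa : (x,a) ∈ X.1) (hxb : (x,b) ∈ X.1) (hxc : (x,c) ∈ X.1)
    (haq : (a,q) ∈ X.1) (hbq : (b,q) ∈ X.1) (hcq : (c,q) ∈ X.1)
    (hxq : (x,q) ∉ X.1) : Win Z X := by
  obtain ⟨Hab, Hbc, Hca, Hba, Hcb, Hac⟩ := H
  have dab : a ≠ b := loopfree X.2 Hab.1
  have dbc : b ≠ c := loopfree X.2 Hbc.1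
  have dca : c ≠ a := loopfree X.2 Hca.1
  -- S1 : remove (x,b),(c,q) add (x,q),(c,b)
  obtain ⟨Y1, hY1, r1⟩ := reach_one X x b c q
    hxb hcq hxq Hcb.2 dxc dxq dbc dqb.symm
  -- S2 : remove (c,a),(b,q) add (c,q),(b,a)
  have m1 : (c,a) ∈ Y1.1 := by
    rw [hY1]; exact mem_sw Hca.1 (pne1 dxc.symm) (pne2 dqa.symm)
  have m2 : (b,q) ∈ Y1.1 := by
    rw [hY1]; exact mem_sw hbq (pne1 dxb.symm) (pne1 dbc)
  have m3 : (c,q) ∉ Y1.1 := by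
    rw [hY1]; exact notMem_sw_kl dxc.symm dqb
  have m4 : (b,a) ∉ Y1.1 := by
    rw [hY1]; exact notMem_sw Hba.2 (pne1 dxb.symm) (pne1 dbc)
  obtain ⟨Y2, hY2, r2⟩ := reach_one Y1 c a b q
    m1 m2 m3 m4 dbc.symm dqc.symm dab dqa.symm
  -- S3 : remove (a,b),(x,c) add (a,c),(x,b)
  have t5 : (a,b) ∈ Y1.1 := by
    rw [hY1]; exact mem_sw Hab.1 (pne1 dxa.symm) (pne1 dca.symm)
  have m5 : (a,b) ∈ Y2.1 := by
    rw [hY2]; exact mem_sw t5 (pne1 dca.symm) (pne1 dab)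
  have t6 : (x,c) ∈ Y1.1 := by
    rw [hY1]; exact mem_sw hxc (pne2 dbc.symm) (pne1 dxc)
  have m6 : (x,c) ∈ Y2.1 := by
    rw [hY2]; exact mem_sw t6 (pne1 dxc) (pne1 dxb)
  have t7 : (a,c) ∉ Y1.1 := by
    rw [hY1]; exact notMem_sw Hac.2 (pne1 dxa.symm) (pne1 dca.symm)
  have m7 : (a,c) ∉ Y2.1 := by
    rw [hY2]; exact notMem_sw t7 (pne1 dca.symm) (pne1 dab)
  have t8 : (x,b) ∉ Y1.1 := by
    rw [hY1]; exact notMem_sw_ij dqb.symm dxc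
  have m8 : (x,b) ∉ Y2.1 := by
    rw [hY2]; exact notMem_sw t8 (pne1 dxc) (pne1 dxb)
  obtain ⟨Y3, hY3, r3⟩ := reach_one Y2 a b x c
    m5 m6 m7 m8 dxa.symm dca.symm dxb.symm dbc
  -- S4 : remove (b,c),(x,q) add (b,q),(x,c)
  have t9 : (b,c) ∈ Y1.1 := by
    rw [hY1]; exact mem_sw Hbc.1 (pne1 dxb.symm) (pne1 dbc)
  have t9' : (b,c) ∈ Y2.1 := by
    rw [hY2]; exact mem_sw t9 (pne1 dbc) (pne2 dqc.symm)
  have m9 : (b,c) ∈ Y3.1 := by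
    rw [hY3]; exact mem_sw t9' (pne1 dab.symm) (pne1 dxb.symm)
  have t10 : (x,q) ∈ Y1.1 := by
    rw [hY1]; exact mem_sw_il
  have t10' : (x,q) ∈ Y2.1 := by
    rw [hY2]; exact mem_sw t10 (pne1 dxc) (pne1 dxb)
  have m10 : (x,q) ∈ Y3.1 := by
    rw [hY3]; exact mem_sw t10' (pne1 dxa) (pne2 dqc)
  have t11 : (b,q) ∉ Y2.1 := by
    rw [hY2]; exact notMem_sw_kl dbc dqa
  have m11 : (b,q) ∉ Y3.1 := by
    rw [hY3]; exact notMem_sw t11 (pne1 dab.symm) (pne1 dxb.symm)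
  have m12 : (x,c) ∉ Y3.1 := by
    rw [hY3]; exact notMem_sw_kl dxa dbc.symm
  obtain ⟨Y4, hY4, r4⟩ := reach_one Y3 b c x q
    m9 m10 m11 m12 dxb.symm dqb.symm dxc.symm dqc.symm
  refine ⟨Y4, Relation.ReflTransGen.tail (Relation.ReflTransGen.tail
    (Relation.ReflTransGen.tail (Relation.ReflTransGen.single r1) r2) r3) r4, ?_⟩
  apply mu_lt_of_phi_lt Y4.2 Z.2
  have hp1 := Phi_swSet (T := Z.1) hxb hcq hxq Hcb.2 dxc
  have hp2 := Phi_swSet (T := Z.1) m1 m2 m3 m4 dbc.symm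
  have hp3 := Phi_swSet (T := Z.1) m5 m6 m7 m8 dxa.symm
  have hp4 := Phi_swSet (T := Z.1) m9 m10 m11 m12 dxb.symm
  rw [hY1] at hp2
  rw [hY2, hY1] at hp3
  rw [hY3, hY2, hY1] at hp4
  rw [hY4, hY3, hY2, hY1]
  simp only [if_neg Hbc.2, if_pos Hba.1, if_neg Hab.2, if_pos Hac.1,
    if_neg Hca.2, if_pos Hcb.1] at hp1 hp2 hp3 hp4
  omega

/-- T4: an arc (x,y) entirely outside the triangle. -/
lemma tri_T4 (H : TriH Z X a b c)
    (dxa : x ≠ a) (dxb : x ≠ b) (dxc : x ≠ c)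
    (dya : y ≠ a) (dyb : y ≠ b) (dyc : y ≠ c) (dxy : x ≠ y)
    (hxy : (x,y) ∈ X.1)
    (hay : (a,y) ∉ X.1) (hby : (b,y) ∉ X.1) (hcy : (c,y) ∉ X.1)
    (hxb : (x,b) ∉ X.1) : Win Z X := by
  obtain ⟨Hab, Hbc, Hca, Hba, Hcb, Hac⟩ := H
  have dab : a ≠ b := loopfree X.2 Hab.1
  have dbc : b ≠ c := loopfree X.2 Hbc.1
  have dca : c ≠ a := loopfree X.2 Hca.1
  -- S1 : remove (a,b),(x,y) add (a,y),(x,b)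
  obtain ⟨Y1, hY1, r1⟩ := reach_one X a b x y
    Hab.1 hxy hay hxb dxa.symm dya.symm dxb.symm dyb.symm
  -- S2 : remove (b,c),(a,y) add (b,y),(a,c)
  have m1 : (b,c) ∈ Y1.1 := by
    rw [hY1]; exact mem_sw Hbc.1 (pne1 dab.symm) (pne1 dxb.symm)
  have m2 : (a,y) ∈ Y1.1 := by rw [hY1]; exact mem_sw_il
  have m3 : (b,y) ∉ Y1.1 := by
    rw [hY1]; exact notMem_sw hby (pne1 dab.symm) (pne1 dxb.symm)
  have m4 : (a,c) ∉ Y1.1 := by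
    rw [hY1]; exact notMem_sw Hac.2 (pne2 dyc.symm) (pne1 dxa.symm)
  obtain ⟨Y2, hY2, r2⟩ := reach_one Y1 b c a y
    m1 m2 m3 m4 dab.symm dyb.symm dca dyc.symm
  -- S3 : remove (c,a),(b,y) add (c,y),(b,a)
  have t5 : (c,a) ∈ Y1.1 := by
    rw [hY1]; exact mem_sw Hca.1 (pne1 dca) (pne1 dxc.symm)
  have m5 : (c,a) ∈ Y2.1 := by
    rw [hY2]; exact mem_sw t5 (pne1 dbc.symm) (pne1 dca)
  have m6 : (b,y) ∈ Y2.1 := by rw [hY2]; exact mem_sw_il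
  have t7 : (c,y) ∉ Y1.1 := by
    rw [hY1]; exact notMem_sw hcy (pne1 dca) (pne1 dxc.symm)
  have m7 : (c,y) ∉ Y2.1 := by
    rw [hY2]; exact notMem_sw t7 (pne1 dbc.symm) (pne1 dca)
  have t8 : (b,a) ∉ Y1.1 := by
    rw [hY1]; exact notMem_sw Hba.2 (pne1 dab.symm) (pne1 dxb.symm)
  have m8 : (b,a) ∉ Y2.1 := by
    rw [hY2]; exact notMem_sw t8 (pne2 dya.symm) (pne1 dab.symm)
  obtain ⟨Y3, hY3, r3⟩ := reach_one Y2 c a b y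
    m5 m6 m7 m8 dbc.symm dyc.symm dab dya.symm
  -- S4 : remove (c,y),(x,b) add (c,b),(x,y)
  have m9 : (c,y) ∈ Y3.1 := by rw [hY3]; exact mem_sw_il
  have t10 : (x,b) ∈ Y1.1 := by rw [hY1]; exact mem_sw_kj
  have t10' : (x,b) ∈ Y2.1 := by
    rw [hY2]; exact mem_sw t10 (pne1 dxb) (pne1 dxa)
  have m10 : (x,b) ∈ Y3.1 := by
    rw [hY3]; exact mem_sw t10' (pne1 dxc) (pne1 dxb)
  have t11 : (c,b) ∉ Y1.1 := by
    rw [hY1]; exact notMem_sw Hcb.2 (pne1 dca) (pne1 dxc.symm)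
  have t11' : (c,b) ∉ Y2.1 := by
    rw [hY2]; exact notMem_sw t11 (pne1 dbc.symm) (pne1 dca)
  have m11 : (c,b) ∉ Y3.1 := by
    rw [hY3]; exact notMem_sw t11' (pne2 dyb.symm) (pne1 dbc.symm)
  have t12 : (x,y) ∉ Y1.1 := by
    rw [hY1]; exact notMem_sw_kl dxa dyb
  have t12' : (x,y) ∉ Y2.1 := by
    rw [hY2]; exact notMem_sw t12 (pne1 dxb) (pne1 dxa)
  have m12 : (x,y) ∉ Y3.1 := by
    rw [hY3]; exact notMem_sw t12' (pne1 dxc) (pne1 dxb)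
  obtain ⟨Y4, hY4, r4⟩ := reach_one Y3 c y x b
    m9 m10 m11 m12 dxc.symm dbc.symm dxy.symm dyb
  refine ⟨Y4, Relation.ReflTransGen.tail (Relation.ReflTransGen.tail
    (Relation.ReflTransGen.tail (Relation.ReflTransGen.single r1) r2) r3) r4, ?_⟩
  apply mu_lt_of_phi_lt Y4.2 Z.2
  have hp1 := Phi_swSet (T := Z.1) Hab.1 hxy hay hxb dxa.symm
  have hp2 := Phi_swSet (T := Z.1) m1 m2 m3 m4 dab.symm
  have hp3 := Phi_swSet (T := Z.1) m5 m6 m7 m8 dbc.symm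
  have hp4 := Phi_swSet (T := Z.1) m9 m10 m11 m12 dxc.symm
  rw [hY1] at hp2
  rw [hY2, hY1] at hp3
  rw [hY3, hY2, hY1] at hp4
  rw [hY4, hY3, hY2, hY1]
  simp only [if_neg Hbc.2, if_pos Hba.1, if_neg Hab.2, if_pos Hac.1,
    if_neg Hca.2, if_pos Hcb.1] at hp1 hp2 hp3 hp4
  omega

end Tri
def Nin (X : Finset (Arc n)) (w : Fin n) : Finset (Fin n) :=
  (X.filter (fun p => p.2 = w)).image Prod.fst

lemma mem_Nin {X : Finset (Arc n)} {w v : Fin n} : v ∈ Nin X w ↔ (v,w) ∈ X := by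
  constructor
  · rintro hm
    obtain ⟨p, hp, rfl⟩ := Finset.mem_image.1 hm
    obtain ⟨hpX, hp1⟩ := Finset.mem_filter.1 hp
    have : p = (p.1, w) := by rw [← hp1]
    rwa [← this]
  · intro hm
    exact Finset.mem_image.2 ⟨(v,w), Finset.mem_filter.2 ⟨hm, rfl⟩, rfl⟩

lemma card_Nin {X : Finset (Arc n)} (hX : IsRegularDigraph n d X) (w : Fin n) :
    (Nin X w).card = d := by
  rw [Nin, Finset.card_image_of_injOn, (hX.2 w).2]
  intro p hp q hq he
  obtain ⟨-, hp1⟩ := Finset.mem_filter.1 hp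
  obtain ⟨-, hq1⟩ := Finset.mem_filter.1 hq
  exact Prod.ext he (hp1.trans hq1.symm)

section TriMain
variable {Z X : Omega n d}

/-- counting: the number of in-neighbours of `a` outside the triangle, when
exactly one triangle vertex points at `a`. -/
lemma card_sdiff_tri {N : Finset (Fin n)} {a b c u : Fin n}
    (hcard : N.card = d) (hint : N ∩ {a,b,c} = {u}) :
    (N \ ({a,b,c} : Finset (Fin n))).card + 1 = d := by
  have := Finset.card_inter_add_card_sdiff N ({a,b,c} : Finset (Fin n))
  rw [hint, Finset.card_singleton] at this
  omega

lemma win_tri (hn : 4 ≤ n) (Z X : Omega n d) (a b c : Fin n)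
    (hab : (a,b) ∈ X.1 ∧ (a,b) ∉ Z.1) (hbc : (b,c) ∈ X.1 ∧ (b,c) ∉ Z.1)
    (hca : (c,a) ∈ X.1 ∧ (c,a) ∉ Z.1)
    (hba : (b,a) ∈ Z.1 ∧ (b,a) ∉ X.1) (hcb : (c,b) ∈ Z.1 ∧ (c,b) ∉ X.1)
    (hac : (a,c) ∈ Z.1 ∧ (a,c) ∉ X.1) : Win Z X := by
  have H : TriH Z X a b c := ⟨hab, hbc, hca, hba, hcb, hac⟩
  have dab : a ≠ b := loopfree X.2 hab.1
  have dbc : b ≠ c := loopfree X.2 hbc.1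
  have dca : c ≠ a := loopfree X.2 hca.1
  by_cases h1 : ∃ v : Fin n, v ≠ a ∧ v ≠ b ∧ v ≠ c ∧
      (((v,a) ∈ X.1 ∧ (v,b) ∉ X.1) ∨ ((v,b) ∈ X.1 ∧ (v,c) ∉ X.1) ∨
       ((v,c) ∈ X.1 ∧ (v,a) ∉ X.1))
  · obtain ⟨v, dva, dvb, dvc, hpat⟩ := h1
    rcases hpat with ⟨p1, p2⟩ | ⟨p1, p2⟩ | ⟨p1, p2⟩
    · by_cases p3 : (v,c) ∈ X.1
      · exact tri_Opair (triH_rot (triH_rot H)) dvc dva dvb p3 p1 p2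
      · exact tri_Osing H dva dvb dvc p1 p2 p3
    · by_cases p3 : (v,a) ∈ X.1
      · exact tri_Opair H dva dvb dvc p3 p1 p2
      · exact tri_Osing (triH_rot H) dvb dvc dva p1 p2 p3
    · by_cases p3 : (v,b) ∈ X.1
      · exact tri_Opair (triH_rot H) dvb dvc dva p3 p1 p2
      · exact tri_Osing (triH_rot (triH_rot H)) dvc dva dvb p1 p2 p3
  by_cases h2 : ∃ v : Fin n, v ≠ a ∧ v ≠ b ∧ v ≠ c ∧
      (((a,v) ∈ X.1 ∧ (b,v) ∉ X.1) ∨ ((b,v) ∈ X.1 ∧ (c,v) ∉ X.1) ∨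
       ((c,v) ∈ X.1 ∧ (a,v) ∉ X.1))
  · obtain ⟨v, dva, dvb, dvc, hpat⟩ := h2
    rcases hpat with ⟨p1, p2⟩ | ⟨p1, p2⟩ | ⟨p1, p2⟩
    · by_cases p3 : (c,v) ∈ X.1
      · exact tri_Ipair (triH_rot (triH_rot H)) dvc dva dvb p3 p1 p2
      · exact tri_Ising H dva dvb dvc p1 p2 p3
    · by_cases p3 : (a,v) ∈ X.1
      · exact tri_Ipair H dva dvb dvc p3 p1 p2
      · exact tri_Ising (triH_rot H) dvb dvc dva p1 p2 p3
    · by_cases p3 : (b,v) ∈ X.1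
      · exact tri_Ipair (triH_rot H) dvb dvc dva p3 p1 p2
      · exact tri_Ising (triH_rot (triH_rot H)) dvc dva dvb p1 p2 p3
  -- all-or-nothing patterns
  have hOut : ∀ v : Fin n, v ≠ a → v ≠ b → v ≠ c →
      (((v,a) ∈ X.1 → (v,b) ∈ X.1) ∧ ((v,b) ∈ X.1 → (v,c) ∈ X.1) ∧
       ((v,c) ∈ X.1 → (v,a) ∈ X.1)) := by
    intro v hva hvb hvc
    refine ⟨?_, ?_, ?_⟩ <;> intro hin <;> by_contra hnot <;>
      exact h1 ⟨v, hva, hvb, hvc, by tauto⟩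
  have hIn : ∀ v : Fin n, v ≠ a → v ≠ b → v ≠ c →
      (((a,v) ∈ X.1 → (b,v) ∈ X.1) ∧ ((b,v) ∈ X.1 → (c,v) ∈ X.1) ∧
       ((c,v) ∈ X.1 → (a,v) ∈ X.1)) := by
    intro v hva hvb hvc
    refine ⟨?_, ?_, ?_⟩ <;> intro hin <;> by_contra hnot <;>
      exact h2 ⟨v, hva, hvb, hvc, by tauto⟩
  clear h1 h2
  -- intersections of neighbourhoods with the triangle
  have hInA : Nin X.1 a ∩ {a,b,c} = {c} := by
    ext v
    simp only [Finset.mem_inter, Finset.mem_insert, Finset.mem_singleton, mem_Nin]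
    constructor
    · rintro ⟨hv, rfl | rfl | rfl⟩
      · exact absurd (loopfree X.2 hv) (fun h => h rfl)
      · exact absurd hv hba.2
      · rfl
    · rintro rfl
      exact ⟨hca.1, Or.inr (Or.inr rfl)⟩
  have hInB : Nin X.1 b ∩ {a,b,c} = {a} := by
    ext v
    simp only [Finset.mem_inter, Finset.mem_insert, Finset.mem_singleton, mem_Nin]
    constructor
    · rintro ⟨hv, rfl | rfl | rfl⟩
      · rfl
      · exact absurd (loopfree X.2 hv) (fun h => h rfl)
      · exact absurd hv hcb.2
    · rintro rfl
      exact ⟨hab.1, Or.inl rfl⟩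
  have hInC : Nin X.1 c ∩ {a,b,c} = {b} := by
    ext v
    simp only [Finset.mem_inter, Finset.mem_insert, Finset.mem_singleton, mem_Nin]
    constructor
    · rintro ⟨hv, rfl | rfl | rfl⟩
      · exact absurd hv hac.2
      · rfl
      · exact absurd (loopfree X.2 hv) (fun h => h rfl)
    · rintro rfl
      exact ⟨hbc.1, Or.inr (Or.inl rfl)⟩
  have hOutA : Nout X.1 a ∩ {a,b,c} = {b} := by
    ext v
    simp only [Finset.mem_inter, Finset.mem_insert, Finset.mem_singleton, mem_Nout]
    constructor
    · rintro ⟨hv, rfl | rfl | rfl⟩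
      · exact absurd (loopfree X.2 hv) (fun h => h rfl)
      · rfl
      · exact absurd hv hac.2
    · rintro rfl
      exact ⟨hab.1, Or.inr (Or.inl rfl)⟩
  have hOutB : Nout X.1 b ∩ {a,b,c} = {c} := by
    ext v
    simp only [Finset.mem_inter, Finset.mem_insert, Finset.mem_singleton, mem_Nout]
    constructor
    · rintro ⟨hv, rfl | rfl | rfl⟩
      · exact absurd hv hba.2
      · exact absurd (loopfree X.2 hv) (fun h => h rfl)
      · rfl
    · rintro rfl
      exact ⟨hbc.1, Or.inr (Or.inr rfl)⟩
  have hOutC : Nout X.1 c ∩ {a,b,c} = {a} := by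
    ext v
    simp only [Finset.mem_inter, Finset.mem_insert, Finset.mem_singleton, mem_Nout]
    constructor
    · rintro ⟨hv, rfl | rfl | rfl⟩
      · rfl
      · exact absurd hv hcb.2
      · exact absurd (loopfree X.2 hv) (fun h => h rfl)
    · rintro rfl
      exact ⟨hca.1, Or.inl rfl⟩
  have cInA := card_sdiff_tri (d := d) (card_Nin X.2 a) hInA
  have cInB := card_sdiff_tri (d := d) (card_Nin X.2 b) hInB
  have cInC := card_sdiff_tri (d := d) (card_Nin X.2 c) hInC
  have cOutA := card_sdiff_tri (d := d) (card_Nout X.2 a) hOutA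
  have cOutB := card_sdiff_tri (d := d) (card_Nout X.2 b) hOutB
  have cOutC := card_sdiff_tri (d := d) (card_Nout X.2 c) hOutC
  have hd1 : 1 ≤ d := by omega
  by_cases hd : d = 1
  · -- T4 route
    subst hd
    have empties : ∀ w : Fin n, w ∉ ({a,b,c} : Finset (Fin n)) →
        (w,a) ∉ X.1 ∧ (w,b) ∉ X.1 ∧ (w,c) ∉ X.1 ∧
        (a,w) ∉ X.1 ∧ (b,w) ∉ X.1 ∧ (c,w) ∉ X.1 := by
      intro w hw
      refine ⟨?_, ?_, ?_, ?_, ?_, ?_⟩ <;> intro hmem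
      · have : w ∈ Nin X.1 a \ ({a,b,c} : Finset (Fin n)) :=
          Finset.mem_sdiff.2 ⟨mem_Nin.2 hmem, hw⟩
        have h0 : (Nin X.1 a \ ({a,b,c} : Finset (Fin n))).card = 0 := by omega
        rw [Finset.card_eq_zero.1 h0] at this
        exact absurd this (Finset.notMem_empty _)
      · have : w ∈ Nin X.1 b \ ({a,b,c} : Finset (Fin n)) :=
          Finset.mem_sdiff.2 ⟨mem_Nin.2 hmem, hw⟩
        have h0 : (Nin X.1 b \ ({a,b,c} : Finset (Fin n))).card = 0 := by omega
        rw [Finset.card_eq_zero.1 h0] at this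
        exact absurd this (Finset.notMem_empty _)
      · have : w ∈ Nin X.1 c \ ({a,b,c} : Finset (Fin n)) :=
          Finset.mem_sdiff.2 ⟨mem_Nin.2 hmem, hw⟩
        have h0 : (Nin X.1 c \ ({a,b,c} : Finset (Fin n))).card = 0 := by omega
        rw [Finset.card_eq_zero.1 h0] at this
        exact absurd this (Finset.notMem_empty _)
      · have : w ∈ Nout X.1 a \ ({a,b,c} : Finset (Fin n)) :=
          Finset.mem_sdiff.2 ⟨mem_Nout.2 hmem, hw⟩
        have h0 : (Nout X.1 a \ ({a,b,c} : Finset (Fin n))).card = 0 := by omega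
        rw [Finset.card_eq_zero.1 h0] at this
        exact absurd this (Finset.notMem_empty _)
      · have : w ∈ Nout X.1 b \ ({a,b,c} : Finset (Fin n)) :=
          Finset.mem_sdiff.2 ⟨mem_Nout.2 hmem, hw⟩
        have h0 : (Nout X.1 b \ ({a,b,c} : Finset (Fin n))).card = 0 := by omega
        rw [Finset.card_eq_zero.1 h0] at this
        exact absurd this (Finset.notMem_empty _)
      · have : w ∈ Nout X.1 c \ ({a,b,c} : Finset (Fin n)) :=
          Finset.mem_sdiff.2 ⟨mem_Nout.2 hmem, hw⟩
        have h0 : (Nout X.1 c \ ({a,b,c} : Finset (Fin n))).card = 0 := by omega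
        rw [Finset.card_eq_zero.1 h0] at this
        exact absurd this (Finset.notMem_empty _)
    -- a vertex outside the triangle
    have hex : ∃ x : Fin n, x ∉ ({a,b,c} : Finset (Fin n)) := by
      by_contra hc'
      push_neg at hc'
      have hsub : (Finset.univ : Finset (Fin n)) ⊆ {a,b,c} := fun v _ => hc' v
      have hle := Finset.card_le_card hsub
      have h3 : ({a,b,c} : Finset (Fin n)).card ≤ 3 := by
        apply le_trans (Finset.card_insert_le _ _)
        apply Nat.succ_le_succ
        apply le_trans (Finset.card_insert_le _ _)
        simp
      rw [Finset.card_univ, Fintype.card_fin] at hle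
      omega
    obtain ⟨x, hx⟩ := hex
    have hNx : 0 < (Nout X.1 x).card := by rw [card_Nout X.2]; omega
    obtain ⟨y, hy⟩ := Finset.card_pos.1 hNx
    have hxy : (x,y) ∈ X.1 := mem_Nout.1 hy
    have hyT : y ∉ ({a,b,c} : Finset (Fin n)) := by
      intro hyT
      rcases Finset.mem_insert.1 hyT with rfl | hyT'
      · exact (empties x hx).1 hxy
      · rcases Finset.mem_insert.1 hyT' with rfl | hyT''
        · exact (empties x hx).2.1 hxy
        · rw [Finset.mem_singleton] at hyT''
          subst hyT''
          exact (empties x hx).2.2.1 hxy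
    have hx0 := hx
    have hyT0 := hyT
    simp only [Finset.mem_insert, Finset.mem_singleton, not_or] at hx hyT
    exact tri_T4 H hx.1 hx.2.1 hx.2.2 hyT.1 hyT.2.1 hyT.2.2
      (loopfree X.2 hxy) hxy
      (empties y hyT0).2.2.2.1
      (empties y hyT0).2.2.2.2.1
      (empties y hyT0).2.2.2.2.2
      (empties x hx0).2.1
  · -- T3 route, d ≥ 2
    have hd2 : 2 ≤ d := by omega
    -- pick x pointing into a from outside
    have hPne : 0 < (Nin X.1 a \ ({a,b,c} : Finset (Fin n))).card := by omega
    obtain ⟨x, hxmem⟩ := Finset.card_pos.1 hPne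
    obtain ⟨hxin, hxT⟩ := Finset.mem_sdiff.1 hxmem
    have hxa : (x,a) ∈ X.1 := mem_Nin.1 hxin
    simp only [Finset.mem_insert, Finset.mem_singleton, not_or] at hxT
    obtain ⟨dxa, dxb, dxc⟩ := hxT
    have hxb : (x,b) ∈ X.1 := (hOut x dxa dxb dxc).1 hxa
    have hxc : (x,c) ∈ X.1 := (hOut x dxa dxb dxc).2.1 hxb
    -- d ≥ 3
    have hsubT : ({a,b,c} : Finset (Fin n)) ⊆ Nout X.1 x := by
      intro v hv
      rcases Finset.mem_insert.1 hv with rfl | hv'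
      · exact mem_Nout.2 hxa
      · rcases Finset.mem_insert.1 hv' with rfl | hv''
        · exact mem_Nout.2 hxb
        · rw [Finset.mem_singleton] at hv''
          subst hv''
          exact mem_Nout.2 hxc
    have hcardT : ({a,b,c} : Finset (Fin n)).card = 3 := by
      rw [Finset.card_insert_of_notMem (by simp [dab, dca.symm]),
          Finset.card_insert_of_notMem (by simp [dbc]), Finset.card_singleton]
    have hd3 : 3 ≤ d := by
      have := Finset.card_le_card hsubT
      rw [hcardT, card_Nout X.2] at this
      exact this
    -- the set of candidates for q
    have hOutXT : Nout X.1 x ∩ {a,b,c} = {a,b,c} := by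
      rw [Finset.inter_eq_right.2 hsubT]
    have cR : (Nout X.1 x \ ({a,b,c} : Finset (Fin n))).card + 3 = d := by
      have := Finset.card_inter_add_card_sdiff (Nout X.1 x) ({a,b,c} : Finset (Fin n))
      rw [hOutXT, hcardT, card_Nout X.2] at this
      omega
    have hQR : 0 < ((Nout X.1 a \ ({a,b,c} : Finset (Fin n))) \
        insert x (Nout X.1 x \ ({a,b,c} : Finset (Fin n)))).card := by
      have hle := Finset.le_card_sdiff
        (insert x (Nout X.1 x \ ({a,b,c} : Finset (Fin n))))
        (Nout X.1 a \ ({a,b,c} : Finset (Fin n)))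
      have hins : (insert x (Nout X.1 x \ ({a,b,c} : Finset (Fin n)))).card ≤ d - 2 := by
        apply le_trans (Finset.card_insert_le _ _)
        omega
      omega
    obtain ⟨q, hqmem⟩ := Finset.card_pos.1 hQR
    obtain ⟨hq1, hq2⟩ := Finset.mem_sdiff.1 hqmem
    obtain ⟨hqout, hqT⟩ := Finset.mem_sdiff.1 hq1
    have haq : (a,q) ∈ X.1 := mem_Nout.1 hqout
    simp only [Finset.mem_insert, Finset.mem_singleton, not_or] at hqT hq2
    obtain ⟨dqa, dqb, dqc⟩ := hqT
    have dxq : x ≠ q := fun e => hq2.1 e.symm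
    have hxq : (x,q) ∉ X.1 := by
      intro hm
      exact hq2.2 (Finset.mem_sdiff.2 ⟨mem_Nout.2 hm, by simp [dqa, dqb, dqc]⟩)
    have hbq : (b,q) ∈ X.1 := (hIn q dqa dqb dqc).1 haq
    have hcq : (c,q) ∈ X.1 := (hIn q dqa dqb dqc).2.1 hbq
    exact tri_T3 H dxa dxb dxc dqa dqb dqc dxq hxa hxb hxc haq hbq hcq hxq

end TriMain
lemma win_m2 (Z X : Omega n d) (t h : ℕ → Fin n)
    (hpt : ∀ x, t (x+2) = t x)
    (hb : ∀ x, (t x, h x) ∈ X.1 ∧ (t x, h x) ∉ Z.1)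
    (hr : ∀ x, (t (x+1), h x) ∈ Z.1 ∧ (t (x+1), h x) ∉ X.1) : Win Z X := by
  have e0b := hb 0
  have e1b := hb 1
  have r0 := hr 0
  have r1 := hr 1
  rw [hpt 0] at r1
  have d1 : t 0 ≠ h 0 := loopfree X.2 e0b.1
  have d2 : t 0 ≠ t 1 := fun e => r0.2 (by rw [← e]; exact e0b.1)
  have d3 : t 0 ≠ h 1 := loopfree Z.2 r1.1
  have d4 : h 0 ≠ t 1 := (loopfree Z.2 r0.1).symm
  have d5 : h 0 ≠ h 1 := fun e => r0.2 (by rw [e]; exact e1b.1)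
  have d6 : t 1 ≠ h 1 := loopfree X.2 e1b.1
  obtain ⟨Y, hY, hrel⟩ := reach_one X (t 0) (h 0) (t 1) (h 1)
    e0b.1 e1b.1 r1.2 r0.2 d2 d3 d4 d5
  refine ⟨Y, Relation.ReflTransGen.single hrel, ?_⟩
  apply mu_lt_of_phi_lt Y.2 Z.2
  have hp := Phi_swSet (T := Z.1) e0b.1 e1b.1 r1.2 r0.2 d2
  simp only [if_neg e0b.2, if_neg e1b.2, if_pos r1.1, if_pos r0.1] at hp
  rw [hY]
  omega

lemma master_win (hn : 4 ≤ n) (Z X : Omega n d) (hphi : 0 < Phi Z.1 X.1) :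
    Win Z X := by
  obtain ⟨h2m, hmdn, hwm⟩ := mW_spec X.2 Z.2 hphi
  obtain ⟨t, h, hpt, hph, hb, hr⟩ := hwm
  rcases Nat.lt_or_ge (mW Z.1 X.1) 3 with hm3 | hm3
  · have hm2 : mW Z.1 X.1 = 2 := by omega
    rw [hm2] at hpt hph
    exact win_m2 Z X t h hpt hb hr
  · by_cases hC : ∀ x, h (x+1) = t x
    · rcases Nat.lt_or_ge (mW Z.1 X.1) 4 with hm4 | hm4
      · have hm3' : mW Z.1 X.1 = 3 := by omega
        rw [hm3'] at hpt hph
        have hh0 : h 0 = t 2 := by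
          have := hph 0
          rw [show (0:ℕ)+3 = 2+1 from rfl] at this
          rw [← this, hC 2]
        have hh1 : h 1 = t 0 := hC 0
        have hh2 : h 2 = t 1 := hC 1
        have b0 := hb 0; have b1 := hb 1; have b2 := hb 2
        have r0 := hr 0; have r1 := hr 1; have r2 := hr 2
        rw [hh0] at b0 r0
        rw [hh1] at b1 r1
        rw [hh2] at b2 r2
        rw [hpt 0] at r2
        exact win_tri hn Z X (t 0) (t 2) (t 1) b0 b2 b1 r1 r0 r2
      · have hbf : ∀ x, (t (x+1), t x) ∈ X.1 ∧ (t (x+1), t x) ∉ Z.1 := by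
          intro x
          have := hb (x+1)
          rwa [hC x] at this
        have hrf : ∀ x, (t (x+2), t x) ∈ Z.1 ∧ (t (x+2), t x) ∉ X.1 := by
          intro x
          have := hr (x+1)
          rwa [hC x] at this
        exact win_ac Z X (mW Z.1 X.1) hm4 rfl t hpt hbf hrf
    · push_neg at hC
      obtain ⟨a, ha⟩ := hC
      exact win_gen' Z X (mW Z.1 X.1) hm3 rfl t h hpt hph hb hr a (Ne.symm ha)

lemma reach_target (hn : 4 ≤ n) (Z : Omega n d) (X : Omega n d) : Reach X Z := by
  have main : ∀ N (X : Omega n d), mu (d := d) Z.1 X.1 ≤ N → Reach X Z := by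
    intro N
    induction N with
    | zero =>
      intro X hX
      by_cases hphi : 0 < Phi Z.1 X.1
      · obtain ⟨Y, hXY, hlt⟩ := master_win hn Z X hphi
        omega
      · have h0 : Phi Z.1 X.1 = 0 := by omega
        have : X = Z := Subtype.ext (phi_eq_zero_iff.1 h0)
        rw [this]
    | succ N ih =>
      intro X hX
      by_cases hphi : 0 < Phi Z.1 X.1
      · obtain ⟨Y, hXY, hlt⟩ := master_win hn Z X hphi
        exact Relation.ReflTransGen.trans hXY (ih Y (by omega))
      · have h0 : Phi Z.1 X.1 = 0 := by omega
        have : X = Z := Subtype.ext (phi_eq_zero_iff.1 h0)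
        rw [this]
  exact main (mu (d := d) Z.1 X.1) X (le_refl _)


end SwitchConn

/-- For `n ≥ 4` and `1 ≤ d ≤ n-1`, the set `Ω_{n,d}` is connected
under switches: any `G' ∈ Ω_{n,d}` can be reached from any `G ∈ Ω_{n,d}` by a finite
sequence of switches, all intermediate digraphs being in `Ω_{n,d}`. -/
theorem switch_chain_connected (n d : ℕ) (hn : 4 ≤ n)
    (hd1 : 1 ≤ d) (hd2 : d ≤ n - 1) (G G' : Omega n d) :
    Relation.ReflTransGen (fun X Y : Omega n d => IsSwitch X.val Y.val) G G' :=
  SwitchConn.reach_target hn G' G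
end

section
/- Let n ≥ 4, 1 ≤ d ≤ n−1, and suppose G ∈ Ω_{n,d} contains three vertices {v_0, v_1, v_2} such that the induced digraph G[{v_0,v_1,v_2}] is a directed 3-cycle. Then there exists either a useful neighbour or a useful arc for this 3-cycle. -/
/-- The set `𝒲^{(b,c)}(U,G)`: vertices `x ∉ U` such that for every `u ∈ U`, the
arc `(x,u)` is present iff `b` and the arc `(u,x)` is present iff `c`. -/
def Wset {n : ℕ} (A : Finset (Fin n × Fin n)) (U : Finset (Fin n))
    (b c : Bool) (x : Fin n) : Prop :=
  x ∉ U ∧ ∀ u ∈ U, (((x, u) ∈ A) ↔ b = true) ∧ (((u, x) ∈ A) ↔ c = true)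

/-- A useful neighbour for the `3`-cycle on `U`: a vertex outside `U` lying in none
of the four sets `𝒲^{(i,j)}(U,G)`. -/
def UsefulNeighbour {n : ℕ} (A : Finset (Fin n × Fin n)) (U : Finset (Fin n))
    (x : Fin n) : Prop :=
  x ∉ U ∧
    ¬(Wset A U false false x ∨ Wset A U false true x ∨
      Wset A U true false x ∨ Wset A U true true x)

/-- A useful arc `(x,y)` for the `3`-cycle on `U`: either
(U1) `(x,y) ∈ A(G)` with `x ∈ 𝒲^{(0,0)} ∪ 𝒲^{(0,1)}` and `y ∈ 𝒲^{(0,0)} ∪ 𝒲^{(1,0)}`, or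
(U2) `(x,y) ∉ A(G)` with `x ∈ 𝒲^{(1,0)} ∪ 𝒲^{(1,1)}` and `y ∈ 𝒲^{(0,1)} ∪ 𝒲^{(1,1)}`. -/
def UsefulArc {n : ℕ} (A : Finset (Fin n × Fin n)) (U : Finset (Fin n))
    (x y : Fin n) : Prop :=
  x ≠ y ∧
    (((x, y) ∈ A ∧ (Wset A U false false x ∨ Wset A U false true x) ∧
        (Wset A U false false y ∨ Wset A U true false y)) ∨
     ((x, y) ∉ A ∧ (Wset A U true false x ∨ Wset A U true true x) ∧
        (Wset A U false true y ∨ Wset A U true true y)))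

/-- If `G ∈ Ω_{n,d}` (with `n ≥ 4`, `1 ≤ d ≤ n-1`) contains three
vertices `{v₀,v₁,v₂}` inducing a directed `3`-cycle, then there exists a useful
neighbour or a useful arc for this `3`-cycle. -/
theorem useful_neighbour_or_arc_exists (n d : ℕ) (hn : 4 ≤ n)
    (hd1 : 1 ≤ d) (hd2 : d ≤ n - 1)
    (A : Finset (Fin n × Fin n)) (hA : IsRegularDigraph n d A)
    (v0 v1 v2 : Fin n) (h01 : v0 ≠ v1) (h02 : v0 ≠ v2) (h12 : v1 ≠ v2)
    (hc1 : (v0, v1) ∈ A) (hc2 : (v1, v2) ∈ A) (hc3 : (v2, v0) ∈ A)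
    (hc4 : (v1, v0) ∉ A) (hc5 : (v2, v1) ∉ A) (hc6 : (v0, v2) ∉ A) :
    (∃ x, UsefulNeighbour A {v0, v1, v2} x) ∨
      (∃ x y, UsefulArc A {v0, v1, v2} x y) := by
  by_contra hcon
  push_neg at hcon
  obtain ⟨hN, hArc⟩ := hcon
  set U : Finset (Fin n) := {v0, v1, v2} with hU
  have noloop := hA.1
  have hv0U : v0 ∈ U := by simp [hU]
  have hv1U : v1 ∈ U := by simp [hU]
  have hv2U : v2 ∈ U := by simp [hU]
  -- out-neighbourhood
  have memout : ∀ v y : Fin n,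
      y ∈ (A.filter fun a => a.1 = v).image Prod.snd ↔ (v, y) ∈ A := by
    intro v y
    simp only [Finset.mem_image, Finset.mem_filter]
    constructor
    · rintro ⟨⟨a, b⟩, ⟨hab, rfl⟩, rfl⟩; exact hab
    · intro h; exact ⟨(v, y), ⟨h, rfl⟩, rfl⟩
  have memin : ∀ v y : Fin n,
      y ∈ (A.filter fun a => a.2 = v).image Prod.fst ↔ (y, v) ∈ A := by
    intro v y
    simp only [Finset.mem_image, Finset.mem_filter]
    constructor
    · rintro ⟨⟨a, b⟩, ⟨hab, rfl⟩, rfl⟩; exact hab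
    · intro h; exact ⟨(y, v), ⟨h, rfl⟩, rfl⟩
  have hout : ∀ v : Fin n, ((A.filter fun a => a.1 = v).image Prod.snd).card = d := by
    intro v
    rw [Finset.card_image_of_injOn, (hA.2 v).1]
    intro a ha b hb hab
    simp only [Finset.coe_filter, Set.mem_setOf_eq] at ha hb
    exact Prod.ext (ha.2.trans hb.2.symm) hab
  have hin : ∀ v : Fin n, ((A.filter fun a => a.2 = v).image Prod.fst).card = d := by
    intro v
    rw [Finset.card_image_of_injOn, (hA.2 v).2]
    intro a ha b hb hab
    simp only [Finset.coe_filter, Set.mem_setOf_eq] at ha hb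
    exact Prod.ext hab (ha.2.trans hb.2.symm)
  -- every vertex outside U is in some W set
  have hW : ∀ x : Fin n, x ∉ U →
      (Wset A U false false x ∨ Wset A U false true x ∨
       Wset A U true false x ∨ Wset A U true true x) := by
    intro x hx
    by_contra h
    exact hN x ⟨hx, h⟩
  -- if x receives arcs from all of U, then 3 ≤ d
  have hrec3 : ∀ x : Fin n, (∀ u ∈ U, (u, x) ∈ A) → 3 ≤ d := by
    intro x hx
    have hsub : U ⊆ (A.filter fun a => a.2 = x).image Prod.fst := by
      intro u hu
      exact (memin x u).2 (hx u hu)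
    have hUcard : U.card = 3 := by
      rw [hU, Finset.card_insert_of_notMem (by simp [h01, h02]),
        Finset.card_insert_of_notMem (by simp [h12]), Finset.card_singleton]
    calc 3 = U.card := hUcard.symm
      _ ≤ _ := Finset.card_le_card hsub
      _ = d := hin x
  have hsend3 : ∀ x : Fin n, (∀ u ∈ U, (x, u) ∈ A) → 3 ≤ d := by
    intro x hx
    have hsub : U ⊆ (A.filter fun a => a.1 = x).image Prod.snd := by
      intro u hu
      exact (memout x u).2 (hx u hu)
    have hUcard : U.card = 3 := by
      rw [hU, Finset.card_insert_of_notMem (by simp [h01, h02]),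
        Finset.card_insert_of_notMem (by simp [h12]), Finset.card_singleton]
    calc 3 = U.card := hUcard.symm
      _ ≤ _ := Finset.card_le_card hsub
      _ = d := hout x
  rcases Nat.lt_or_ge d 2 with hd | hd
  · -- case d = 1
    have hd' : d = 1 := by omega
    -- find a vertex outside U
    obtain ⟨x, hxU⟩ : ∃ x : Fin n, x ∉ U := by
      by_contra h
      push_neg at h
      have hsub : (Finset.univ : Finset (Fin n)) ⊆ U := fun x _ => h x
      have := Finset.card_le_card hsub
      have hUcard : U.card = 3 := by
        rw [hU, Finset.card_insert_of_notMem (by simp [h01, h02]),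
          Finset.card_insert_of_notMem (by simp [h12]), Finset.card_singleton]
      rw [Finset.card_univ, Fintype.card_fin, hUcard] at this
      omega
    have hx00 : Wset A U false false x := by
      rcases hW x hxU with h | h | h | h
      · exact h
      · exact absurd (hrec3 x fun u hu => ((h.2 u hu).2).2 rfl) (by omega)
      · exact absurd (hsend3 x fun u hu => ((h.2 u hu).1).2 rfl) (by omega)
      · exact absurd (hsend3 x fun u hu => ((h.2 u hu).1).2 rfl) (by omega)
    -- x has an out-arc
    obtain ⟨y, hy⟩ : ∃ y, y ∈ (A.filter fun a => a.1 = x).image Prod.snd := by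
      apply Finset.card_pos.1
      rw [hout x]; omega
    have hxyA : (x, y) ∈ A := (memout x y).1 hy
    have hxy : x ≠ y := noloop _ hxyA
    have hyU : y ∉ U := by
      intro hyU
      have := (hx00.2 y hyU).1.1 hxyA
      simp at this
    have hy' : Wset A U false false y ∨ Wset A U true false y := by
      rcases hW y hyU with h | h | h | h
      · exact Or.inl h
      · exact absurd (hrec3 y fun u hu => ((h.2 u hu).2).2 rfl) (by omega)
      · exact Or.inr h
      · exact absurd (hrec3 y fun u hu => ((h.2 u hu).2).2 rfl) (by omega)
    exact hArc x y ⟨hxy, Or.inl ⟨hxyA, Or.inl hx00, hy'⟩⟩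
  · -- case d ≥ 2 : v0 has an in-neighbour w ∉ U
    obtain ⟨w, hw⟩ : ∃ w, w ∈ ((A.filter fun a => a.2 = v0).image Prod.fst).erase v2 := by
      apply Finset.card_pos.1
      have := Finset.pred_card_le_card_erase
        (s := (A.filter fun a => a.2 = v0).image Prod.fst) (a := v2)
      rw [hin v0] at this
      omega
    obtain ⟨hwv2, hwmem⟩ := Finset.mem_erase.1 hw
    have hwA : (w, v0) ∈ A := (memin v0 w).1 hwmem
    have hwv0 : w ≠ v0 := noloop _ hwA
    have hwv1 : w ≠ v1 := by rintro rfl; exact hc4 hwA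
    have hwU : w ∉ U := by simp [hU, hwv0, hwv1, hwv2]
    have hw1 : Wset A U true false w ∨ Wset A U true true w := by
      rcases hW w hwU with h | h | h | h
      · exact absurd hwA (fun hh => by simpa using ((h.2 v0 hv0U).1.1 hh))
      · exact absurd hwA (fun hh => by simpa using ((h.2 v0 hv0U).1.1 hh))
      · exact Or.inl h
      · exact Or.inr h
    have hwall : ∀ u ∈ U, (w, u) ∈ A := by
      intro u hu
      rcases hw1 with h | h
      · exact (h.2 u hu).1.2 rfl
      · exact (h.2 u hu).1.2 rfl
    -- key claim: w has arcs to all out-neighbours of v0 except v1 and w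
    have hkey : ∀ y : Fin n, (v0, y) ∈ A → y ≠ v1 → y ≠ w → (w, y) ∈ A := by
      intro y hyA hyv1 hyw
      have hyv0 : y ≠ v0 := fun h => noloop _ hyA (by rw [h])
      have hyv2 : y ≠ v2 := fun h => hc6 (h ▸ hyA)
      have hyU : y ∉ U := by simp [hU, hyv0, hyv1, hyv2]
      have hy1 : Wset A U false true y ∨ Wset A U true true y := by
        rcases hW y hyU with h | h | h | h
        · exact absurd hyA (fun hh => by simpa using ((h.2 v0 hv0U).2.1 hh))
        · exact Or.inl h
        · exact absurd hyA (fun hh => by simpa using ((h.2 v0 hv0U).2.1 hh))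
        · exact Or.inr h
      by_contra hwy
      exact hArc w y ⟨fun h => hyw h.symm, Or.inr ⟨hwy, hw1, hy1⟩⟩
    -- build a big subset of the out-neighbourhood of w
    set T : Finset (Fin n) :=
      (((A.filter fun a => a.1 = v0).image Prod.snd).erase v1).erase w with hT
    have hTcard : d - 2 ≤ T.card := by
      have h1 := Finset.pred_card_le_card_erase
        (s := ((A.filter fun a => a.1 = v0).image Prod.snd).erase v1) (a := w)
      have h2 := Finset.pred_card_le_card_erase
        (s := (A.filter fun a => a.1 = v0).image Prod.snd) (a := v1)
      rw [hout v0] at h2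
      rw [hT]
      omega
    have hv0T : v0 ∉ T := by
      intro h
      have := Finset.mem_of_mem_erase (Finset.mem_of_mem_erase h)
      exact noloop _ ((memout v0 v0).1 this) rfl
    have hv1T : v1 ∉ T := fun h =>
      (Finset.ne_of_mem_erase (Finset.mem_of_mem_erase h)) rfl
    have hv2T : v2 ∉ T := by
      intro h
      have := Finset.mem_of_mem_erase (Finset.mem_of_mem_erase h)
      exact hc6 ((memout v0 v2).1 this)
    set S : Finset (Fin n) := insert v0 (insert v1 (insert v2 T)) with hS
    have hScard : S.card = 3 + T.card := by
      rw [hS, Finset.card_insert_of_notMem (by simp [h01, h02, hv0T]),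
        Finset.card_insert_of_notMem (by simp [h12, hv1T]),
        Finset.card_insert_of_notMem hv2T]
      ring
    have hSsub : S ⊆ (A.filter fun a => a.1 = w).image Prod.snd := by
      intro y hy
      rw [memout]
      simp only [hS, Finset.mem_insert] at hy
      rcases hy with hy | hy | hy | hy
      · rw [hy]; exact hwall v0 hv0U
      · rw [hy]; exact hwall v1 hv1U
      · rw [hy]; exact hwall v2 hv2U
      · have hyw : y ≠ w := Finset.ne_of_mem_erase hy
        have hyv1 : y ≠ v1 := Finset.ne_of_mem_erase (Finset.mem_of_mem_erase hy)
        have hyA : (v0, y) ∈ A :=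
          (memout v0 y).1 (Finset.mem_of_mem_erase (Finset.mem_of_mem_erase hy))
        exact hkey y hyA hyv1 hyw
    have := Finset.card_le_card hSsub
    rw [hout w, hScard] at this
    omega
end

section
/- Let n ≥ 4 and 1 ≤ d ≤ n−1, and let N = |Ω_{n,d}|. The smallest eigenvalue λ_{N−1} of the switch chain on Ω_{n,d} satisfies (1 + λ_{N−1})^{-1} ≤ (1/4)·d²·n², i.e. λ_{N−1} ≥ −1 + 4/(d²n²). -/
attribute [local instance] Classical.propDecidable

/-! ### Auxiliary lemmas -/

lemma finset_pair_eq_pair_iff {α : Type*} [DecidableEq α] {a b c d : α} :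
    ({a, b} : Finset α) = {c, d} ↔ (a = c ∧ b = d) ∨ (a = d ∧ b = c) := by
  rw [← Finset.coe_inj]
  push_cast
  exact Set.pair_eq_pair_iff

lemma card_arcs {n d : ℕ} {A : Finset (Fin n × Fin n)} (h : IsRegularDigraph n d A) :
    A.card = d * n := by
  classical
  rw [Finset.card_eq_sum_card_fiberwise (f := Prod.fst) (t := Finset.univ)
    (fun x _ => Finset.mem_univ _)]
  have : ∀ v : Fin n, (A.filter fun x => x.1 = v).card = d := fun v => (h.2 v).1
  simp [this, mul_comm]

lemma card_le_three {α : Type*} [DecidableEq α] (a b c : α) {s : Finset α}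
    (hs : ∀ x ∈ s, x = a ∨ x = b ∨ x = c) : s.card ≤ 3 := by
  have hsub : s ⊆ {a, b, c} := by intro x hx; simpa using hs x hx
  have h1 := Finset.card_insert_le a ({b, c} : Finset α)
  have h2 := Finset.card_insert_le b ({c} : Finset α)
  have h3 := Finset.card_le_card hsub
  simp at h1 h2
  omega

lemma four_distinct {n : ℕ} {i j k l : Fin n}
    (h : ({i, j, k, l} : Finset (Fin n)).card = 4) :
    i ≠ j ∧ i ≠ k ∧ i ≠ l ∧ j ≠ k ∧ j ≠ l ∧ k ≠ l := by
  refine ⟨?_, ?_, ?_, ?_, ?_, ?_⟩ <;> rintro rfl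
  · have := card_le_three i k l (s := ({i, i, k, l} : Finset (Fin n)))
      (by intro x hx; simp at hx; tauto)
    omega
  · have := card_le_three i j l (s := ({i, j, i, l} : Finset (Fin n)))
      (by intro x hx; simp at hx; tauto)
    omega
  · have := card_le_three i j k (s := ({i, j, k, i} : Finset (Fin n)))
      (by intro x hx; simp at hx; tauto)
    omega
  · have := card_le_three i j l (s := ({i, j, j, l} : Finset (Fin n)))
      (by intro x hx; simp at hx; tauto)
    omega
  · have := card_le_three i j k (s := ({i, j, k, j} : Finset (Fin n)))
      (by intro x hx; simp at hx; tauto)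
    omega
  · have := card_le_three i j k (s := ({i, j, k, k} : Finset (Fin n)))
      (by intro x hx; simp at hx; tauto)
    omega

lemma exists_adjacent {n d : ℕ} (hd : 1 ≤ d) (hn : 1 ≤ n) {A : Finset (Fin n × Fin n)}
    (h : IsRegularDigraph n d A) :
    ∃ a b : Fin n × Fin n, a ∈ A ∧ b ∈ A ∧ a ≠ b ∧ a.2 = b.1 := by
  classical
  have hcard := card_arcs h
  have hApos : A.Nonempty := Finset.card_pos.mp (by rw [hcard]; exact Nat.mul_pos hd hn)
  obtain ⟨a, ha⟩ := hApos
  have h2 := (h.2 a.2).1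
  have hBpos : (A.filter fun x => x.1 = a.2).Nonempty := Finset.card_pos.mp (by omega)
  obtain ⟨b, hb⟩ := hBpos
  rw [Finset.mem_filter] at hb
  refine ⟨a, b, ha, hb.1, ?_, hb.2.symm⟩
  rintro rfl
  exact h.1 a ha hb.2

/-- Choose a witness pair of arcs for a switch. -/
noncomputable def pairOf {n : ℕ} (X Z : Finset (Fin n × Fin n)) : Finset (Fin n × Fin n) :=
  if h : IsSwitch X Z then
    {(h.choose, h.choose_spec.choose),
      (h.choose_spec.choose_spec.choose, h.choose_spec.choose_spec.choose_spec.choose)}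
  else ∅

lemma pairOf_spec {n : ℕ} {X Z : Finset (Fin n × Fin n)} (h : IsSwitch X Z) :
    ∃ i j k l : Fin n,
      (i, j) ∈ X ∧ (k, l) ∈ X ∧ ({i, j, k, l} : Finset (Fin n)).card = 4 ∧
      (i, l) ∉ X ∧ (k, j) ∉ X ∧
      Z = (X \ {(i, j), (k, l)}) ∪ {(i, l), (k, j)} ∧
      pairOf X Z = {(i, j), (k, l)} := by
  refine ⟨h.choose, h.choose_spec.choose, h.choose_spec.choose_spec.choose,
    h.choose_spec.choose_spec.choose_spec.choose, ?_⟩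
  have hs := h.choose_spec.choose_spec.choose_spec.choose_spec
  exact ⟨hs.1, hs.2.1, hs.2.2.1, hs.2.2.2.1, hs.2.2.2.2.1, hs.2.2.2.2.2, by
    unfold pairOf; rw [dif_pos h]⟩

/-- The number of switch-neighbours of `X` is strictly less than `binom(dn,2)`. -/
lemma neighbor_count {n d : ℕ} (hn : 4 ≤ n) (hd : 1 ≤ d) (X : Omega n d) :
    (Finset.univ.filter fun Z : Omega n d => Z ≠ X ∧ IsSwitch X.val Z.val).card + 1
      ≤ (d * n).choose 2 := by
  classical
  obtain ⟨a, b, haX, hbX, hab, hadj⟩ := exists_adjacent hd (by omega) X.2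
  set p0 : Finset (Fin n × Fin n) := {a, b} with hp0
  have hp0mem : p0 ∈ X.val.powersetCard 2 := by
    rw [Finset.mem_powersetCard]
    exact ⟨by intro x hx; simp [hp0] at hx; rcases hx with rfl | rfl <;> assumption,
      Finset.card_pair hab⟩
  have hmaps : ∀ Z ∈ (Finset.univ.filter fun Z : Omega n d =>
      Z ≠ X ∧ IsSwitch X.val Z.val),
      pairOf X.val Z.val ∈ (X.val.powersetCard 2).erase p0 := by
    intro Z hZ
    rw [Finset.mem_filter] at hZ
    obtain ⟨i, j, k, l, hij, hkl, hc4, hil, hkj, hZeq, hpair⟩ := pairOf_spec hZ.2.2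
    obtain ⟨hij', hik, hil', hjk, hjl, hkl'⟩ := four_distinct hc4
    rw [hpair, Finset.mem_erase]
    constructor
    · intro hcontra
      rw [hp0, finset_pair_eq_pair_iff] at hcontra
      rcases hcontra with ⟨h1, h2⟩ | ⟨h1, h2⟩
      · -- (i,j) = a, (k,l) = b, a.2 = b.1 gives j = k
        apply hjk
        have : j = a.2 := by rw [← h1]
        rw [this, hadj, ← h2]
      · -- (i,j) = b, (k,l) = a, a.2 = b.1 gives l = i
        apply hil'
        have : l = a.2 := by rw [← h2]
        rw [hadj, ← h1] at this
        exact this.symm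
    · rw [Finset.mem_powersetCard]
      refine ⟨?_, ?_⟩
      · intro x hx; simp at hx; rcases hx with rfl | rfl <;> assumption
      · exact Finset.card_pair (by simp [Prod.ext_iff]; intro h; exact absurd h hik)
  have hinj : Set.InjOn (fun Z : Omega n d => pairOf X.val Z.val)
      ((Finset.univ.filter fun Z : Omega n d => Z ≠ X ∧ IsSwitch X.val Z.val) : Finset (Omega n d)) := by
    intro Z1 hZ1 Z2 hZ2 heq
    simp only [Finset.coe_filter, Set.mem_setOf_eq] at hZ1 hZ2
    obtain ⟨i1, j1, k1, l1, _, _, _, _, _, hZ1eq, hp1⟩ := pairOf_spec hZ1.2.2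
    obtain ⟨i2, j2, k2, l2, _, _, _, _, _, hZ2eq, hp2⟩ := pairOf_spec hZ2.2.2
    have heq' : pairOf X.val Z1.val = pairOf X.val Z2.val := heq
    have hpe : ({((i1 : Fin n), j1), (k1, l1)} : Finset (Fin n × Fin n)) = {(i2, j2), (k2, l2)} := by
      rw [← hp1, ← hp2, heq']
    rw [finset_pair_eq_pair_iff] at hpe
    apply Subtype.ext
    rcases hpe with ⟨h1, h2⟩ | ⟨h1, h2⟩
    · obtain ⟨rfl, rfl⟩ : i1 = i2 ∧ j1 = j2 := by simpa [Prod.ext_iff] using h1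
      obtain ⟨rfl, rfl⟩ : k1 = k2 ∧ l1 = l2 := by simpa [Prod.ext_iff] using h2
      rw [hZ1eq, hZ2eq]
    · obtain ⟨rfl, rfl⟩ : i1 = k2 ∧ j1 = l2 := by simpa [Prod.ext_iff] using h1
      obtain ⟨rfl, rfl⟩ : k1 = i2 ∧ l1 = j2 := by simpa [Prod.ext_iff] using h2
      rw [hZ1eq, hZ2eq, Finset.pair_comm ((i1 : Fin n), j1) ((k1 : Fin n), l1),
        Finset.pair_comm ((i1 : Fin n), l1) ((k1 : Fin n), j1)]
  have hcard := Finset.card_le_card_of_injOn _ hmaps hinj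
  have herase : ((X.val.powersetCard 2).erase p0).card = (X.val.powersetCard 2).card - 1 :=
    Finset.card_erase_of_mem hp0mem
  have hpow : (X.val.powersetCard 2).card = (d * n).choose 2 := by
    rw [Finset.card_powersetCard, card_arcs X.2]
  have hpos : 0 < (X.val.powersetCard 2).card := Finset.card_pos.mpr ⟨p0, hp0mem⟩
  omega
set_option maxHeartbeats 1000000 in
/-- For `n ≥ 4` and `1 ≤ d ≤ n-1`, the smallest eigenvalue
`λ_{N-1}` of the switch chain on `Ω_{n,d}` satisfies
`(1 + λ_{N-1})⁻¹ ≤ (1/4) d² n²`, i.e. `λ_{N-1} ≥ -1 + 4/(d²n²)`.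
Since `λ_{N-1}` is the least eigenvalue, this is stated for every real
eigenvalue `λ` of the transition matrix. -/
theorem switch_chain_smallest_eigenvalue (n d : ℕ) (hn : 4 ≤ n)
    (hd1 : 1 ≤ d) (hd2 : d ≤ n - 1) (lam : ℝ)
    (hlam : ∃ ψ : Omega n d → ℝ, ψ ≠ 0 ∧ (switchP n d).mulVec ψ = lam • ψ) :
    (1 + lam)⁻¹ ≤ (1 / 4) * (d : ℝ) ^ 2 * (n : ℝ) ^ 2 ∧
      -1 + 4 / ((d : ℝ) ^ 2 * (n : ℝ) ^ 2) ≤ lam := by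
  classical
  obtain ⟨ψ, hψ0, hψ⟩ := hlam
  have hdn : 4 ≤ d * n := le_trans hn (by nlinarith)
  set C : ℝ := (((d * n).choose 2 : ℕ) : ℝ) with hCdef
  have hCpos : (0 : ℝ) < C := by
    have h0 : 0 < (d * n).choose 2 := Nat.choose_pos (by omega)
    rw [hCdef]
    exact_mod_cast h0
  -- pick the coordinate with maximal absolute value
  obtain ⟨x0, hx0⟩ := Function.ne_iff.mp hψ0
  obtain ⟨X, -, hX⟩ := Finset.exists_max_image Finset.univ (fun Y => |ψ Y|)
    ⟨x0, Finset.mem_univ x0⟩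
  have hMpos : 0 < |ψ X| := lt_of_lt_of_le (abs_pos.mpr hx0) (hX x0 (Finset.mem_univ x0))
  set T : Finset (Omega n d) :=
    Finset.univ.filter (fun Z : Omega n d => Z ≠ X ∧ IsSwitch X.val Z.val) with hTdef
  set S : ℝ := ∑ Z : Omega n d,
      (if Z ≠ X ∧ IsSwitch X.val Z.val then C⁻¹ else 0) with hSdef
  -- S = |T| / C
  have hSval : S = (T.card : ℝ) * C⁻¹ := by
    rw [hSdef, hTdef, ← Finset.sum_filter, Finset.sum_const, nsmul_eq_mul]
  have hSnonneg : 0 ≤ S := by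
    rw [hSval]; positivity
  -- off-diagonal entries and row sums
  have hdiag : switchP n d X X = 1 - S := by
    simp [switchP, hSdef, hCdef]
  have hoffnn : ∀ Y ∈ Finset.univ.erase X, 0 ≤ switchP n d X Y := by
    intro Y hY
    have hYX : ¬ (X = Y) := fun h => (Finset.mem_erase.mp hY).1 h.symm
    simp only [switchP, Matrix.of_apply]
    rw [if_neg hYX]
    split <;> positivity
  have hSsum : ∑ Y ∈ Finset.univ.erase X, switchP n d X Y = S := by
    rw [hSdef, ← Finset.add_sum_erase Finset.univ _ (Finset.mem_univ X)]
    have h0 : (if X ≠ X ∧ IsSwitch X.val X.val then C⁻¹ else 0) = 0 := by simp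
    rw [h0, zero_add]
    apply Finset.sum_congr rfl
    intro Y hY
    have hYX : Y ≠ X := (Finset.mem_erase.mp hY).1
    simp only [switchP, Matrix.of_apply]
    rw [if_neg (show ¬ (X = Y) from fun h => hYX h.symm)]
    simp [hYX, hCdef]
  -- the eigenvalue equation at X
  have heig : switchP n d X X * ψ X
      + ∑ Y ∈ Finset.univ.erase X, switchP n d X Y * ψ Y = lam * ψ X := by
    have := congrFun hψ X
    simp only [Matrix.mulVec, dotProduct, Pi.smul_apply, smul_eq_mul] at this
    rw [Finset.add_sum_erase Finset.univ (fun Y => switchP n d X Y * ψ Y) (Finset.mem_univ X)]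
    exact this
  -- Gershgorin-type bound
  have hR : |lam - (1 - S)| * |ψ X| ≤ S * |ψ X| := by
    have h1 : lam * ψ X - (1 - S) * ψ X
        = ∑ Y ∈ Finset.univ.erase X, switchP n d X Y * ψ Y := by
      rw [← heig, hdiag]; ring
    calc |lam - (1 - S)| * |ψ X| = |lam * ψ X - (1 - S) * ψ X| := by
          rw [← abs_mul]; ring_nf
      _ = |∑ Y ∈ Finset.univ.erase X, switchP n d X Y * ψ Y| := by rw [h1]
      _ ≤ ∑ Y ∈ Finset.univ.erase X, |switchP n d X Y * ψ Y| :=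
          Finset.abs_sum_le_sum_abs _ _
      _ ≤ ∑ Y ∈ Finset.univ.erase X, switchP n d X Y * |ψ X| := by
          apply Finset.sum_le_sum
          intro Y hY
          rw [abs_mul, abs_of_nonneg (hoffnn Y hY)]
          exact mul_le_mul_of_nonneg_left (hX Y (Finset.mem_univ Y)) (hoffnn Y hY)
      _ = S * |ψ X| := by rw [← Finset.sum_mul, hSsum]
  have habs : |lam - (1 - S)| ≤ S := le_of_mul_le_mul_right hR hMpos
  have hlow : 1 - 2 * S ≤ lam := by
    have := (abs_le.mp habs).1
    linarith
  -- the combinatorial bound on S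
  have hTcard : T.card + 1 ≤ (d * n).choose 2 := neighbor_count hn hd1 X
  have hTcardR : (T.card : ℝ) ≤ C - 1 := by
    have : (T.card : ℝ) + 1 ≤ C := by rw [hCdef]; exact_mod_cast hTcard
    linarith
  have hSle : S ≤ 1 - C⁻¹ := by
    rw [hSval]
    have h1 : (C - 1) * C⁻¹ = 1 - C⁻¹ := by
      field_simp
    calc (T.card : ℝ) * C⁻¹ ≤ (C - 1) * C⁻¹ :=
          mul_le_mul_of_nonneg_right hTcardR (by positivity)
      _ = 1 - C⁻¹ := h1
  have hCbound : C * 2 ≤ (d : ℝ) ^ 2 * (n : ℝ) ^ 2 := by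
    have hnat : (d * n).choose 2 * 2 ≤ d * n * (d * n) := by
      rw [Nat.choose_two_right]
      exact le_trans (Nat.div_mul_le_self _ 2) (Nat.mul_le_mul_left _ (Nat.sub_le _ _))
    have := (Nat.cast_le (α := ℝ)).mpr hnat
    push_cast at this
    nlinarith
  have hdn2pos : (0 : ℝ) < (d : ℝ) ^ 2 * (n : ℝ) ^ 2 := by
    have h1 : (1 : ℝ) ≤ (d : ℝ) := by exact_mod_cast hd1
    have h2 : (4 : ℝ) ≤ (n : ℝ) := by exact_mod_cast hn
    nlinarith
  -- conclude the eigenvalue lower bound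
  have hmain : -1 + 4 / ((d : ℝ) ^ 2 * (n : ℝ) ^ 2) ≤ lam := by
    have hdiv : 4 / ((d : ℝ) ^ 2 * (n : ℝ) ^ 2) ≤ 2 * C⁻¹ := by
      rw [div_le_iff₀ hdn2pos]
      have hCinv : C * C⁻¹ = 1 := mul_inv_cancel₀ (ne_of_gt hCpos)
      have hCinvpos : 0 < C⁻¹ := inv_pos.mpr hCpos
      nlinarith
    linarith
  refine ⟨?_, hmain⟩
  have h4pos : (0 : ℝ) < 4 / ((d : ℝ) ^ 2 * (n : ℝ) ^ 2) := by positivity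
  have h1lam : 4 / ((d : ℝ) ^ 2 * (n : ℝ) ^ 2) ≤ 1 + lam := by linarith
  calc (1 + lam)⁻¹ ≤ (4 / ((d : ℝ) ^ 2 * (n : ℝ) ^ 2))⁻¹ :=
        inv_anti₀ h4pos h1lam
    _ = (d : ℝ) ^ 2 * (n : ℝ) ^ 2 / 4 := by
        rw [inv_div]
    _ = (1 / 4) * (d : ℝ) ^ 2 * (n : ℝ) ^ 2 := by ring
end

section
/- Let M be an ergodic time-reversible Markov chain on a finite state space Ω with transition matrix P and stationary distribution π. For each x ∈ Ω fix a closed walk σ_x from x to x of odd length in the underlying graph 𝒢 of the chain, let Σ = {σ_x : x ∈ Ω}, and let η = η(Σ) = max_{e∈Γ} (1/Q(e)) · ∑_{x∈Ω, e∈σ_x} |σ_x|·π(x). Then for every function ψ : Ω → ℝ, one has E_π(ψ²) ≤ (η/2)·( E_π(ψ²) + ⟨ψ, Pψ⟩_π ), where E_π(ψ²) = ∑_{x∈Ω} ψ(x)²π(x) and ⟨ψ, Pψ⟩_π = ∑_{x∈Ω} ψ(x)(Pψ)(x)π(x). -/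
attribute [local instance] Classical.propDecidable

/-- The walk (given as its list of vertices) `p` uses the undirected edge `{a,b}`:
`a, b` occur consecutively in `p` in either order. -/
def WalkUses {Ω : Type*} (p : List Ω) (a b : Ω) : Prop :=
  (∃ l₁ l₂, p = l₁ ++ a :: b :: l₂) ∨ (∃ l₁ l₂, p = l₁ ++ b :: a :: l₂)

namespace DOCI
variable {α : Type*}

/-- ordered adjacency in a list -/
def Adj (l : List α) (a b : α) : Prop := ∃ l₁ l₂, l = l₁ ++ a :: b :: l₂

lemma adj_cons {c : α} {l : List α} {a b : α} :
    Adj (c :: l) a b ↔ (c = a ∧ l.head? = some b) ∨ Adj l a b := by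
  constructor
  · rintro ⟨l₁, l₂, h⟩
    cases l₁ with
    | nil =>
      simp only [List.nil_append, List.cons.injEq] at h
      exact Or.inl ⟨h.1, by rw [h.2]; rfl⟩
    | cons d l₁' =>
      simp only [List.cons_append, List.cons.injEq] at h
      exact Or.inr ⟨l₁', l₂, h.2⟩
  · rintro (⟨rfl, hb⟩ | ⟨l₁, l₂, rfl⟩)
    · cases l with
      | nil => simp at hb
      | cons e t => simp only [List.head?_cons, Option.some.injEq] at hb; exact ⟨[], t, by simp [hb]⟩
    · exact ⟨c :: l₁, l₂, rfl⟩

lemma adj_append_left {p : List α} (q : List α) {a b : α} (h : Adj p a b) : Adj (p ++ q) a b := by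
  obtain ⟨l₁, l₂, rfl⟩ := h
  exact ⟨l₁, l₂ ++ q, by simp⟩

lemma adj_append_right (p : List α) {q : List α} {a b : α} (h : Adj q a b) : Adj (p ++ q) a b := by
  obtain ⟨l₁, l₂, rfl⟩ := h
  exact ⟨p ++ l₁, l₂, by simp⟩

lemma adj_append_cases {p q : List α} {a b : α} (h : Adj (p ++ q) a b) :
    Adj p a b ∨ Adj q a b ∨ (p.getLast? = some a ∧ q.head? = some b) := by
  induction p with
  | nil => exact Or.inr (Or.inl (by simpa using h))
  | cons c p' ih =>
    rw [List.cons_append, adj_cons] at h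
    rcases h with ⟨rfl, hb⟩ | h
    · cases p' with
      | nil => exact Or.inr (Or.inr ⟨rfl, by simpa using hb⟩)
      | cons d t =>
        simp only [List.cons_append, List.head?_cons, Option.some.injEq] at hb
        exact Or.inl ⟨[], t, by simp [hb]⟩
    · rcases ih h with h' | h' | ⟨h1, h2⟩
      · exact Or.inl (adj_cons.mpr (Or.inr h'))
      · exact Or.inr (Or.inl h')
      · refine Or.inr (Or.inr ⟨?_, h2⟩)
        cases p' with
        | nil => simp at h1
        | cons d t => rw [List.getLast?_cons_cons]; exact h1

lemma exists_dup_split : ∀ (l : List α), ¬ l.Nodup → ∃ (x : α) (l₁ l₂ l₃ : List α), l = l₁ ++ x :: l₂ ++ x :: l₃ := by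
  intro l
  induction l with
  | nil => intro h; exact absurd List.nodup_nil h
  | cons a t ih =>
    intro h
    by_cases ha : a ∈ t
    · obtain ⟨s, u, rfl⟩ := List.append_of_mem ha
      exact ⟨a, [], s, u, rfl⟩
    · have : ¬ t.Nodup := by
        intro hn; exact h (List.nodup_cons.mpr ⟨ha, hn⟩)
      obtain ⟨x, l₁, l₂, l₃, rfl⟩ := ih this
      exact ⟨x, a :: l₁, l₂, l₃, rfl⟩

lemma eq_append_of_getLast? : ∀ {l : List α} {a : α}, l.getLast? = some a → ∃ l', l = l' ++ [a] := by
  intro l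
  induction l with
  | nil => intro a h; simp at h
  | cons c t ih =>
    intro a h
    cases t with
    | nil => simp only [List.getLast?_singleton, Option.some.injEq] at h; exact ⟨[], by simp [h]⟩
    | cons d t' =>
      rw [List.getLast?_cons_cons] at h
      obtain ⟨l', hl'⟩ := ih h
      exact ⟨c :: l', by rw [List.cons_append, ← hl']⟩

lemma getLast?_append_ne_nil {l₁ l₂ : List α} (h : l₂ ≠ []) :
    (l₁ ++ l₂).getLast? = l₂.getLast? := by
  rw [List.getLast?_append]
  cases hl : l₂.getLast? with
  | none => exact absurd (List.getLast?_eq_none_iff.mp hl) h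
  | some a => rfl

lemma exists_nodup_walk : ∀ (n : ℕ) (l : List α), l.length ≤ n →
    ∃ r : List α, r.Nodup ∧ r.head? = l.head? ∧ r.getLast? = l.getLast? ∧
      r.length ≤ l.length ∧ ∀ a b, Adj r a b → Adj l a b := by
  intro n
  induction n with
  | zero =>
    intro l hl
    have : l = [] := List.length_eq_zero_iff.mp (Nat.le_zero.mp hl)
    subst this
    exact ⟨[], List.nodup_nil, rfl, rfl, le_rfl, fun a b h => h⟩
  | succ n ih =>
    intro l hl
    by_cases hnd : l.Nodup
    · exact ⟨l, hnd, rfl, rfl, le_rfl, fun a b h => h⟩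
    · obtain ⟨x, l₁, l₂, l₃, rfl⟩ := exists_dup_split l hnd
      have hlen : (l₁ ++ x :: l₃).length ≤ n := by
        simp only [List.length_append, List.length_cons] at hl ⊢
        omega
      obtain ⟨r, hr1, hr2, hr3, hr4, hr5⟩ := ih (l₁ ++ x :: l₃) hlen
      refine ⟨r, hr1, ?_, ?_, ?_, ?_⟩
      · rw [hr2]; simp [List.head?_append]
      · rw [hr3, getLast?_append_ne_nil (l₁ := l₁) (by simp),
          getLast?_append_ne_nil (l₁ := l₁ ++ x :: l₂) (l₂ := x :: l₃) (by simp)]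
      · simp only [List.length_append, List.length_cons] at hr4 ⊢
        omega
      · intro a b hab
        rcases adj_append_cases (hr5 a b hab) with h' | h' | ⟨h1, h2⟩
        · exact adj_append_left _ (adj_append_left _ h')
        · exact adj_append_right (l₁ ++ x :: l₂) h'
        · simp only [List.head?_cons, Option.some.injEq] at h2
          obtain ⟨l₁', rfl⟩ := eq_append_of_getLast? h1
          refine ⟨l₁', l₂ ++ x :: l₃, ?_⟩
          simp [← h2]

def lift : List α → Bool → List (α × Bool)
  | [], _ => []
  | a :: t, s => (a, s) :: lift t (!s)

lemma lift_length : ∀ (w : List α) (s : Bool), (lift w s).length = w.length := by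
  intro w
  induction w with
  | nil => intro s; rfl
  | cons a t ih => intro s; simp [lift, ih]

lemma lift_head? : ∀ (w : List α) (s : Bool), (lift w s).head? = w.head?.map (fun a => (a, s)) := by
  intro w s
  cases w <;> simp [lift]

lemma lift_getLast? : ∀ (w : List α) (s : Bool) (a : α), w.getLast? = some a →
    (lift w s).getLast? = some (a, if Even w.length then !s else s) := by
  intro w
  induction w with
  | nil => intro s a h; simp at h
  | cons c t ih =>
    intro s a h
    cases t with
    | nil =>
      simp only [List.getLast?_singleton, Option.some.injEq] at h
      subst h
      simp [lift]
    | cons d t' =>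
      rw [List.getLast?_cons_cons] at h
      show ((c, s) :: lift (d :: t') (!s)).getLast? = _
      rw [show ((c, s) :: lift (d :: t') (!s)) = [(c, s)] ++ lift (d :: t') (!s) from rfl,
        getLast?_append_ne_nil (by simp [lift]), ih (!s) a h]
      by_cases h' : Even t'.length <;>
        simp [List.length_cons, Nat.even_add_one, h']

lemma lift_adj : ∀ (l₁ : List (α × Bool)) (w : List α) (s : Bool) (p q : α × Bool)
    (l₂ : List (α × Bool)), lift w s = l₁ ++ p :: q :: l₂ → q.2 = !p.2 ∧ Adj w p.1 q.1 := by
  intro l₁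
  induction l₁ with
  | nil =>
    intro w s p q l₂ h
    cases w with
    | nil => simp [lift] at h
    | cons a t =>
      cases t with
      | nil => simp [lift] at h
      | cons b t' =>
        simp only [lift, List.nil_append, List.cons.injEq] at h
        obtain ⟨rfl, rfl, -⟩ := h
        exact ⟨rfl, [], t', rfl⟩
  | cons r l₁' ih =>
    intro w s p q l₂ h
    cases w with
    | nil => simp [lift] at h
    | cons a t =>
      simp only [lift, List.cons_append, List.cons.injEq] at h
      obtain ⟨hpar, m₁, m₂, hm⟩ := ih t (!s) p q l₂ h.2
      exact ⟨hpar, a :: m₁, m₂, by rw [hm]; rfl⟩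

lemma adj_of_get? : ∀ (l : List α) (i : ℕ) (a b : α),
    l[i]? = some a → l[i + 1]? = some b → Adj l a b := by
  intro l
  induction l with
  | nil => intro i a b h; simp at h
  | cons c t ih =>
    intro i a b h1 h2
    cases i with
    | zero =>
      simp only [List.getElem?_cons_zero, Option.some.injEq] at h1
      subst h1
      cases t with
      | nil => simp at h2
      | cons d t' =>
        simp only [List.getElem?_cons_succ, List.getElem?_cons_zero, Option.some.injEq] at h2
        exact ⟨[], t', by simp [h2]⟩
    | succ j =>
      simp only [List.getElem?_cons_succ] at h1 h2
      exact adj_cons.mpr (Or.inr (ih j a b h1 h2))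

lemma walkUses_of_adj {l : List α} {a b : α} (h : Adj l a b) : WalkUses l a b := Or.inl h

lemma walkUses_of_adj' {l : List α} {a b : α} (h : Adj l a b) : WalkUses l b a := Or.inr h

lemma key {Ω : Type*} [Fintype Ω] (ψ : Ω → ℝ) (w : List Ω) (x : Ω)
    (h1 : w.head? = some x) (h2 : w.getLast? = some x) (h3 : Odd (w.length - 1)) :
    (2 * ψ x) ^ 2 ≤ ((w.length : ℝ) - 1) *
      ∑ p : Ω × Ω, (if WalkUses w p.1 p.2 then (ψ p.1 + ψ p.2) ^ 2 else 0) := by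
  classical
  have hw_ne : w ≠ [] := by intro h; rw [h] at h1; simp at h1
  have hlen1 : 1 ≤ w.length := List.length_pos_iff.mpr hw_ne
  have heven : Even w.length := by
    obtain ⟨r, hr⟩ := h3
    exact ⟨r + 1, by omega⟩
  have hWhead : (lift w true).head? = some (x, true) := by
    rw [lift_head?, h1]; rfl
  have hWlast : (lift w true).getLast? = some (x, false) := by
    rw [lift_getLast? w true x h2]; simp [heven]
  obtain ⟨ρ, hnd, hh, hl, hle, hadj⟩ :=
    exists_nodup_walk (lift w true).length (lift w true) le_rfl
  rw [hWhead] at hh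
  rw [hWlast] at hl
  rw [lift_length] at hle
  have hρ_ne : ρ ≠ [] := by intro h; rw [h] at hh; simp at hh
  have hρpos : 1 ≤ ρ.length := List.length_pos_iff.mpr hρ_ne
  set k := ρ.length - 1 with hk
  have hρlen : ρ.length = k + 1 := by omega
  set v : ℕ → Ω × Bool := fun i => (ρ[i]?).getD (x, true) with hv
  have hget : ∀ i, i ≤ k → ρ[i]? = some (v i) := by
    intro i hi
    cases hgi : ρ[i]? with
    | none => rw [List.getElem?_eq_none_iff] at hgi; omega
    | some p =>
      have hvp : v i = p := by simp only [hv]; rw [hgi]; rfl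
      rw [hvp]
  have hv0 : v 0 = (x, true) := by
    have h0 : ρ[0]? = some (x, true) := by cases ρ with | nil => simp at hh | cons a t => simpa using hh
    simp only [hv]; rw [h0]; rfl
  have hvk : v k = (x, false) := by
    have h0 : ρ[k]? = some (x, false) := by
      rw [← hl, List.getLast?_eq_getElem?]
    simp only [hv]; rw [h0]; rfl
  have hstep : ∀ i, i < k → (v (i+1)).2 = !(v i).2 ∧ Adj w (v i).1 (v (i+1)).1 := by
    intro i hi
    have hadjρ : Adj ρ (v i) (v (i+1)) :=
      adj_of_get? ρ i _ _ (hget i (le_of_lt hi)) (hget (i+1) (by omega))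
    obtain ⟨l₁, l₂, hdec⟩ := hadj _ _ hadjρ
    exact lift_adj l₁ w true _ _ l₂ hdec
  set h : Ω × Bool → ℝ := fun p => if p.2 then ψ p.1 else -ψ p.1 with hhdef
  set f : ℕ → ℝ := fun i => h (v i) with hfdef
  have hsum : ∑ i ∈ Finset.range k, (f i - f (i+1)) = 2 * ψ x := by
    rw [Finset.sum_range_sub' f k]
    simp only [hfdef, hhdef, hv0, hvk]
    norm_num
    ring
  set F : ℕ → Ω × Ω := fun i =>
    if (v i).2 then ((v i).1, (v (i+1)).1) else ((v (i+1)).1, (v i).1) with hFdef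
  have hdF : ∀ i, i < k → (f i - f (i+1))^2 = (ψ (F i).1 + ψ (F i).2)^2 := by
    intro i hi
    obtain ⟨hpar, -⟩ := hstep i hi
    by_cases hb : (v i).2
    · simp only [hfdef, hhdef, hFdef, hb, hpar, if_true, Bool.not_true, if_false,
        Bool.false_eq_true]
      ring
    · have hb' : (v i).2 = false := by simpa using hb
      simp only [hfdef, hhdef, hFdef, hb', hpar, Bool.not_false, if_true, if_false,
        Bool.false_eq_true]
      ring
  have hFuses : ∀ i, i < k → WalkUses w (F i).1 (F i).2 := by
    intro i hi
    obtain ⟨-, hadjw⟩ := hstep i hi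
    by_cases hb : (v i).2
    · simp only [hFdef, hb, if_true]
      exact walkUses_of_adj hadjw
    · have hb' : (v i).2 = false := by simpa using hb
      simp only [hFdef, hb', if_false, Bool.false_eq_true]
      exact walkUses_of_adj' hadjw
  have hvinj : ∀ i j, i ≤ k → j ≤ k → v i = v j → i = j := by
    intro i j hi hj hij
    refine (List.getElem?_inj (i := i) (j := j) (by omega) hnd).mp ?_
    rw [hget i hi, hget j hj, hij]
  have hFinj : ∀ i ∈ Finset.range k, ∀ j ∈ Finset.range k, F i = F j → i = j := by
    intro i hi j hj hF
    rw [Finset.mem_range] at hi hj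
    obtain ⟨hpi, -⟩ := hstep i hi
    obtain ⟨hpj, -⟩ := hstep j hj
    by_cases hbi : (v i).2 <;> by_cases hbj : (v j).2
    · simp only [hFdef, hbi, hbj, if_true, Prod.mk.injEq] at hF
      have hv12 : v i = v j := Prod.ext_iff.mpr ⟨hF.1, by
        simp [hbi, hbj]⟩
      exact hvinj i j (by omega) (by omega) hv12
    · have hbj' : (v j).2 = false := by simpa using hbj
      simp only [hFdef, hbi, hbj', if_true, if_false, Bool.false_eq_true, Prod.mk.injEq] at hF
      have e1 : v i = v (j+1) := Prod.ext_iff.mpr ⟨hF.1, by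
        simp [hbi, hpj, hbj']⟩
      have e2 : v (i+1) = v j := Prod.ext_iff.mpr ⟨hF.2, by
        simp [hpi, hbi, hbj']⟩
      have g1 := hvinj i (j+1) (by omega) (by omega) e1
      have g2 := hvinj (i+1) j (by omega) (by omega) e2
      omega
    · have hbi' : (v i).2 = false := by simpa using hbi
      simp only [hFdef, hbi', hbj, if_true, if_false, Bool.false_eq_true, Prod.mk.injEq] at hF
      have e1 : v j = v (i+1) := Prod.ext_iff.mpr ⟨hF.1.symm, by
        simp [hbj, hpi, hbi']⟩
      have e2 : v (j+1) = v i := Prod.ext_iff.mpr ⟨hF.2.symm, by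
        simp [hpj, hbj, hbi']⟩
      have g1 := hvinj j (i+1) (by omega) (by omega) e1
      have g2 := hvinj (j+1) i (by omega) (by omega) e2
      omega
    · have hbi' : (v i).2 = false := by simpa using hbi
      have hbj' : (v j).2 = false := by simpa using hbj
      simp only [hFdef, hbi', hbj', if_false, Bool.false_eq_true, Prod.mk.injEq] at hF
      have hv12 : v i = v j := Prod.ext_iff.mpr ⟨hF.2, by simp [hbi', hbj']⟩
      exact hvinj i j (by omega) (by omega) hv12
  -- the chain of inequalities
  have hky : (k:ℝ) ≤ (w.length : ℝ) - 1 := by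
    have : k + 1 ≤ w.length := by omega
    have := (Nat.cast_le (α := ℝ)).mpr this
    push_cast at this ⊢
    linarith
  have hSnn : 0 ≤ ∑ p : Ω × Ω, (if WalkUses w p.1 p.2 then (ψ p.1 + ψ p.2) ^ 2 else 0) := by
    apply Finset.sum_nonneg
    intro p _
    split <;> positivity
  calc (2 * ψ x) ^ 2 = (∑ i ∈ Finset.range k, (f i - f (i+1))) ^ 2 := by rw [hsum]
    _ ≤ (∑ i ∈ Finset.range k, (f i - f (i+1)) ^ 2) * (∑ i ∈ Finset.range k, (1:ℝ) ^ 2) := by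
        have hcs := Finset.sum_mul_sq_le_sq_mul_sq (Finset.range k)
          (fun i => f i - f (i+1)) (fun _ => (1:ℝ))
        simpa using hcs
    _ = (k:ℝ) * ∑ i ∈ Finset.range k, (f i - f (i+1)) ^ 2 := by
        simp [mul_comm]
    _ = (k:ℝ) * ∑ i ∈ Finset.range k, (ψ (F i).1 + ψ (F i).2) ^ 2 := by
        congr 1
        exact Finset.sum_congr rfl (fun i hi => hdF i (Finset.mem_range.mp hi))
    _ = (k:ℝ) * ∑ p ∈ (Finset.range k).image F, (ψ p.1 + ψ p.2) ^ 2 := by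
        rw [Finset.sum_image hFinj]
    _ ≤ (k:ℝ) * ∑ p ∈ Finset.univ.filter (fun p : Ω × Ω => WalkUses w p.1 p.2),
          (ψ p.1 + ψ p.2) ^ 2 := by
        refine mul_le_mul_of_nonneg_left ?_ (by positivity)
        refine Finset.sum_le_sum_of_subset_of_nonneg ?_ (fun p _ _ => by positivity)
        intro p hp
        rw [Finset.mem_image] at hp
        obtain ⟨i, hi, rfl⟩ := hp
        rw [Finset.mem_filter]
        exact ⟨Finset.mem_univ _, hFuses i (Finset.mem_range.mp hi)⟩
    _ = (k:ℝ) * ∑ p : Ω × Ω, (if WalkUses w p.1 p.2 then (ψ p.1 + ψ p.2) ^ 2 else 0) := by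
        rw [Finset.sum_filter]
    _ ≤ ((w.length : ℝ) - 1) *
          ∑ p : Ω × Ω, (if WalkUses w p.1 p.2 then (ψ p.1 + ψ p.2) ^ 2 else 0) := by
        exact mul_le_mul_of_nonneg_right hky hSnn

lemma chain'_adj {R : α → α → Prop} : ∀ {l : List α} {a b : α},
    l.Chain' R → Adj l a b → R a b := by
  intro l a b hc h
  obtain ⟨l₁, l₂, rfl⟩ := h
  induction l₁ with
  | nil => exact (List.isChain_cons_cons.mp hc).1
  | cons c l₁' ih => exact ih hc.tail

end DOCI

/-- Let `M` be an ergodic time-reversible Markov chain on a finite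
state space, and for each state `x` fix a closed walk `σ x` from `x` to `x` of odd
length in the underlying graph of the chain.  With
`η = max_{e ∈ Γ} Q(e)⁻¹ ∑_{x : e ∈ σ_x} |σ_x| π(x)`, one has, for every
`ψ : Ω → ℝ`, `E_π(ψ²) ≤ (η/2) (E_π(ψ²) + ⟨ψ, Pψ⟩_π)`. -/
theorem dirichlet_odd_cycle_inequality {Ω : Type*} [Fintype Ω] [DecidableEq Ω]
    [Nonempty Ω] (P : Matrix Ω Ω ℝ) (π : Ω → ℝ)
    (hP0 : ∀ x y, 0 ≤ P x y) (hP1 : ∀ x, ∑ y, P x y = 1)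
    (hπpos : ∀ x, 0 < π x) (hπsum : ∑ x, π x = 1)
    (hrev : ∀ x y, π x * P x y = π y * P y x)
    (herg : ∃ t : ℕ, ∀ x y, 0 < (P ^ t) x y)
    (σ : Ω → List Ω)
    (hσstart : ∀ x, (σ x).head? = some x)
    (hσend : ∀ x, (σ x).getLast? = some x)
    (hσchain : ∀ x, (σ x).Chain' fun a b => 0 < P a b)
    (hσodd : ∀ x, Odd ((σ x).length - 1))
    (η : ℝ)
    (hη : IsGreatest
      {r : ℝ | ∃ a b : Ω, 0 < P a b ∧
        r = (π a * P a b)⁻¹ *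
          ∑ x ∈ Finset.univ.filter (fun x => WalkUses (σ x) a b),
            (((σ x).length : ℝ) - 1) * π x} η) :
    ∀ ψ : Ω → ℝ,
      ∑ x, ψ x ^ 2 * π x ≤
        η / 2 * (∑ x, ψ x ^ 2 * π x + ∑ x, ψ x * P.mulVec ψ x * π x) := by
  intro ψ
  set E := ∑ x, ψ x ^ 2 * π x with hE
  set T := ∑ x, ψ x * P.mulVec ψ x * π x with hT
  set g : Ω × Ω → ℝ := fun p => (ψ p.1 + ψ p.2) ^ 2 with hg
  set m : Ω → ℝ := fun x => ((σ x).length : ℝ) - 1 with hm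
  have hm0 : ∀ x : Ω, (0:ℝ) ≤ m x := by
    intro x
    have : (σ x) ≠ [] := by intro h; have := hσstart x; rw [h] at this; simp at this
    have h1 : 1 ≤ (σ x).length := List.length_pos_iff.mpr this
    have := (Nat.one_le_cast (α := ℝ)).mpr h1
    simp only [hm]; linarith
  have hη0 : 0 ≤ η := by
    obtain ⟨a, b, hab, hr⟩ := hη.1
    have hQ : 0 < π a * P a b := mul_pos (hπpos a) hab
    rw [hr]
    refine mul_nonneg (inv_nonneg.mpr hQ.le) (Finset.sum_nonneg fun x _ => ?_)
    exact mul_nonneg (hm0 x) (hπpos x).le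
  have H1 : ∑ x, (2 * ψ x) ^ 2 * π x ≤
      ∑ x, m x * (∑ p : Ω × Ω, if WalkUses (σ x) p.1 p.2 then g p else 0) * π x := by
    refine Finset.sum_le_sum fun x _ => ?_
    exact mul_le_mul_of_nonneg_right
      (DOCI.key ψ (σ x) x (hσstart x) (hσend x) (hσodd x)) (hπpos x).le
  have H2 : ∑ x, m x * (∑ p : Ω × Ω, if WalkUses (σ x) p.1 p.2 then g p else 0) * π x
      = ∑ p : Ω × Ω, g p *
          (∑ x ∈ Finset.univ.filter (fun x => WalkUses (σ x) p.1 p.2), m x * π x) := by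
    have step1 : ∀ x : Ω, m x * (∑ p : Ω × Ω, if WalkUses (σ x) p.1 p.2 then g p else 0) * π x
        = ∑ p : Ω × Ω, (if WalkUses (σ x) p.1 p.2 then g p * (m x * π x) else 0) := by
      intro x
      rw [Finset.mul_sum, Finset.sum_mul]
      refine Finset.sum_congr rfl fun p _ => ?_
      by_cases hc : WalkUses (σ x) p.1 p.2
      · simp only [hc, if_true]; ring
      · simp only [hc, if_false]; ring
    simp_rw [step1]
    rw [Finset.sum_comm]
    refine Finset.sum_congr rfl fun p _ => ?_
    rw [← Finset.sum_filter, Finset.mul_sum]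
  have H3 : ∑ p : Ω × Ω, g p *
        (∑ x ∈ Finset.univ.filter (fun x => WalkUses (σ x) p.1 p.2), m x * π x)
      ≤ ∑ p : Ω × Ω, g p * ((π p.1 * P p.1 p.2) * η) := by
    refine Finset.sum_le_sum fun p _ => ?_
    rcases (Finset.univ.filter (fun x => WalkUses (σ x) p.1 p.2)).eq_empty_or_nonempty with he | hne
    · rw [he, Finset.sum_empty, mul_zero]
      refine mul_nonneg (by positivity) ?_
      exact mul_nonneg (mul_nonneg (hπpos _).le (hP0 _ _)) hη0
    · obtain ⟨x₀, hx₀⟩ := hne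
      rw [Finset.mem_filter] at hx₀
      have huses := hx₀.2
      have hPpos : 0 < P p.1 p.2 := by
        rcases huses with hadj | hadj
        · exact DOCI.chain'_adj (R := fun a b => 0 < P a b) (hσchain x₀) hadj
        · have h21 : 0 < P p.2 p.1 :=
            DOCI.chain'_adj (R := fun a b => 0 < P a b) (hσchain x₀) hadj
          have h1 : 0 < π p.2 * P p.2 p.1 := mul_pos (hπpos _) h21
          rw [← hrev p.1 p.2] at h1
          rcases (hP0 p.1 p.2).lt_or_eq with h | h
          · exact h
          · rw [← h, mul_zero] at h1; exact absurd h1 (lt_irrefl 0)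
      have hQ : 0 < π p.1 * P p.1 p.2 := mul_pos (hπpos _) hPpos
      have hmem := hη.2 ⟨p.1, p.2, hPpos, rfl⟩
      rw [inv_mul_le_iff₀ hQ] at hmem
      exact mul_le_mul_of_nonneg_left hmem (by positivity)
  have H5 : ∑ p : Ω × Ω, g p * ((π p.1 * P p.1 p.2) * η) = η * (2 * E + 2 * T) := by
    have exp1 : ∀ p : Ω × Ω, g p * ((π p.1 * P p.1 p.2) * η)
        = η * ((ψ p.1 ^ 2 * (π p.1 * P p.1 p.2))
            + (2 * (ψ p.1 * (π p.1 * (P p.1 p.2 * ψ p.2))))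
            + (ψ p.2 ^ 2 * (π p.1 * P p.1 p.2))) := by
      intro p; simp only [hg]; ring
    simp_rw [exp1]
    rw [← Finset.mul_sum]
    congr 1
    rw [Fintype.sum_prod_type]
    simp_rw [Finset.sum_add_distrib]
    have pA : ∑ a : Ω, ∑ b : Ω, ψ a ^ 2 * (π a * P a b) = E := by
      rw [hE]
      refine Finset.sum_congr rfl fun a _ => ?_
      have : ∑ b : Ω, ψ a ^ 2 * (π a * P a b) = (ψ a ^ 2 * π a) * ∑ b, P a b := by
        rw [Finset.mul_sum]
        exact Finset.sum_congr rfl fun b _ => by ring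
      rw [this, hP1, mul_one]
    have pB : ∑ a : Ω, ∑ b : Ω, 2 * (ψ a * (π a * (P a b * ψ b))) = 2 * T := by
      rw [hT, Finset.mul_sum]
      refine Finset.sum_congr rfl fun a _ => ?_
      have : ∑ b : Ω, 2 * (ψ a * (π a * (P a b * ψ b)))
          = 2 * (ψ a * π a * ∑ b, P a b * ψ b) := by
        rw [Finset.mul_sum, Finset.mul_sum]
        exact Finset.sum_congr rfl fun b _ => by ring
      rw [this]
      have hmv : P.mulVec ψ a = ∑ b, P a b * ψ b := rfl
      rw [hmv]; ring
    have pC : ∑ a : Ω, ∑ b : Ω, ψ b ^ 2 * (π a * P a b) = E := by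
      have step : ∑ a : Ω, ∑ b : Ω, ψ b ^ 2 * (π a * P a b)
          = ∑ a : Ω, ∑ b : Ω, ψ b ^ 2 * (π b * P b a) :=
        Finset.sum_congr rfl fun a _ =>
          Finset.sum_congr rfl fun b _ => by rw [hrev a b]
      rw [step, Finset.sum_comm, hE]
      refine Finset.sum_congr rfl fun b _ => ?_
      have : ∑ a : Ω, ψ b ^ 2 * (π b * P b a) = (ψ b ^ 2 * π b) * ∑ a, P b a := by
        rw [Finset.mul_sum]
        exact Finset.sum_congr rfl fun a _ => by ring
      rw [this, hP1, mul_one]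
    rw [pA, pB, pC]
    ring
  have FIN : ∑ x, (2 * ψ x) ^ 2 * π x = 4 * E := by
    rw [hE, Finset.mul_sum]
    exact Finset.sum_congr rfl fun x _ => by ring
  have hfinal : 4 * E ≤ η * (2 * E + 2 * T) := by
    rw [← FIN, ← H5]
    calc ∑ x, (2 * ψ x) ^ 2 * π x
        ≤ ∑ x, m x * (∑ p : Ω × Ω, if WalkUses (σ x) p.1 p.2 then g p else 0) * π x := H1
      _ = _ := H2
      _ ≤ _ := H3
  nlinarith [hfinal]
end
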